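/- arXiv:math/9811054 — 4 statements merged into one kernel-verified Lean document; each statement's English description precedes it below -/
import Mathlib

section
/- Let (V, ▷, β) be a crossed module over the Hopf algebra H and let χ ∈ H⊗H be a counital 2-cocycle. Define the twisted coaction β_χ : V → H⊗V by β_χ(v) = χ⁽¹⁾·(χ⁻⁽¹⁾ ▷ v)₍₁₎·χ⁻⁽²⁾ ⊗ χ⁽²⁾ ▷ (χ⁻⁽¹⁾ ▷ v)₍∞₎ (one implicit summation over the legs of χ and one over the legs of χ⁻¹). Then β_χ is a counital coaction which is coassociative for the twisted coproduct, i.e. (ε⊗id)∘β_χ = id_V and (Δ_χ⊗id)∘β_χ = (id⊗β_χ)∘β_χ. -/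
open scoped TensorProduct
open TensorProduct LinearMap

namespace PaperTwist

variable (k H : Type) [Field k] [Ring H] [HopfAlgebra k H]

/-- The comultiplication of `H`. -/
noncomputable def Δ : H →ₗ[k] H ⊗[k] H := Coalgebra.comul

/-- The counit of `H`. -/
noncomputable def ε : H →ₗ[k] k := Coalgebra.counit

/-- The antipode of `H`. -/
noncomputable def S : H →ₗ[k] H := HopfAlgebra.antipode k

/-- `χ`, with (two-sided) inverse `χ'` in the algebra `H ⊗ H`, is a counital 2-cocycle:
`χ₂₃ · ((id ⊗ Δ) χ) = χ₁₂ · ((Δ ⊗ id) χ)` and `(ε ⊗ id) χ = 1 = (id ⊗ ε) χ`. -/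
def IsCocycle (χ χ' : H ⊗[k] H) : Prop :=
  χ * χ' = 1 ∧ χ' * χ = 1 ∧
    (1 ⊗ₜ[k] χ) * (LinearMap.lTensor H (Δ k H) χ) =
      (TensorProduct.assoc k H H H) ((χ ⊗ₜ[k] 1) * (LinearMap.rTensor H (Δ k H) χ)) ∧
    (TensorProduct.lid k H) ((LinearMap.rTensor H (ε k H)) χ) = 1 ∧
    (TensorProduct.rid k H) ((LinearMap.lTensor H (ε k H)) χ) = 1

variable (V : Type) [AddCommGroup V] [Module k V]

/-- A (left-left) crossed module (Drinfeld–Radford–Yetter module) over `H`: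
a left action `ρ` and a counital coassociative left coaction `β` satisfying
`h₁·v₍₁₎ ⊗ h₂ ▷ v₍∞₎ = (h₁ ▷ v)₍₁₎·h₂ ⊗ (h₁ ▷ v)₍∞₎`, the latter expressed via arbitrary
finite representations of `Δ h`. -/
structure IsCrossedModule (ρ : H →ₗ[k] V →ₗ[k] V) (β : V →ₗ[k] H ⊗[k] V) : Prop where
  act_one : ∀ v : V, ρ 1 v = v
  act_mul : ∀ (g h : H) (v : V), ρ (g * h) v = ρ g (ρ h v)
  coact_counit : ∀ v : V, (TensorProduct.lid k V) ((LinearMap.rTensor V (ε k H)) (β v)) = v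
  coact_coassoc : ∀ v : V,
    (LinearMap.rTensor V (Δ k H)) (β v)
      = (TensorProduct.assoc k H H V).symm ((LinearMap.lTensor H β) (β v))
  compat : ∀ (h : H) (v : V) (ι : Type) (s : Finset ι) (h1 h2 : ι → H),
    Δ k H h = ∑ i ∈ s, h1 i ⊗ₜ[k] h2 i →
    ∑ i ∈ s, (TensorProduct.map (LinearMap.mulLeft k (h1 i)) (ρ (h2 i))) (β v)
      = ∑ i ∈ s, (LinearMap.rTensor V (LinearMap.mulRight k (h2 i))) (β (ρ (h1 i) v))

/-- The twisted coaction `β_χ(v) = χ⁽¹⁾·(χ⁻⁽¹⁾ ▷ v)₍₁₎·χ⁻⁽²⁾ ⊗ χ⁽²⁾ ▷ (χ⁻⁽¹⁾ ▷ v)₍∞₎`,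
expressed through finite representations `χ = ∑ x1 i ⊗ x2 i`, `χ⁻¹ = ∑ y1 j ⊗ y2 j`. -/
noncomputable def twistedCoaction (ρ : H →ₗ[k] V →ₗ[k] V) (β : V →ₗ[k] H ⊗[k] V)
    {ι₁ ι₂ : Type} (s₁ : Finset ι₁) (x1 x2 : ι₁ → H) (s₂ : Finset ι₂) (y1 y2 : ι₂ → H) :
    V →ₗ[k] H ⊗[k] V :=
  ∑ i ∈ s₁, ∑ j ∈ s₂,
    (TensorProduct.map ((LinearMap.mulLeft k (x1 i)) ∘ₗ (LinearMap.mulRight k (y2 j)))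
        (ρ (x2 i))) ∘ₗ β ∘ₗ (ρ (y1 j))

/-- The twisted coproduct `Δ_χ(h) = χ · Δ(h) · χ⁻¹`. -/
noncomputable def twistedComul (χ χ' : H ⊗[k] H) : H →ₗ[k] H ⊗[k] H :=
  (LinearMap.mulLeft k χ) ∘ₗ (LinearMap.mulRight k χ') ∘ₗ (Δ k H)

end PaperTwist

open PaperTwist

noncomputable section Aux
namespace PT2
open PaperTwist

set_option maxHeartbeats 1000000
set_option synthInstance.maxHeartbeats 400000

variable {k H V : Type} [Field k] [Ring H] [HopfAlgebra k H] [AddCommGroup V] [Module k V]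

lemma comul_eq : (Δ k H) = (Coalgebra.comul : H →ₗ[k] H ⊗[k] H) := rfl

lemma Δ_mul (a b : H) : Δ k H (a * b) = Δ k H a * Δ k H b := by
  simp [comul_eq]

lemma Δ_one : Δ k H (1 : H) = 1 := by simp [comul_eq, Algebra.TensorProduct.one_def]

lemma ε_mul (a b : H) : ε k H (a * b) = ε k H a * ε k H b :=
  Bialgebra.counit_mul a b

lemma ε_one : ε k H (1 : H) = 1 := Bialgebra.counit_one

-- multiplicativity of lTensor Δ, rTensor Δ, assoc
lemma lTensorΔ_mul (X Y : H ⊗[k] H) :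
    lTensor H (Δ k H) (X * Y) = lTensor H (Δ k H) X * lTensor H (Δ k H) Y := by
  induction X using TensorProduct.induction_on with
  | zero => simp
  | add x y hx hy => simp [add_mul, hx, hy]
  | tmul a b =>
    induction Y using TensorProduct.induction_on with
    | zero => simp
    | add x y hx hy => simp [mul_add, hx, hy]
    | tmul c d => simp [Algebra.TensorProduct.tmul_mul_tmul, Δ_mul]

lemma lTensorΔ_one : lTensor H (Δ k H) (1 : H ⊗[k] H) = 1 := by
  simp [Algebra.TensorProduct.one_def, Δ_one]

lemma rTensorΔ_mul (X Y : H ⊗[k] H) :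
    rTensor H (Δ k H) (X * Y) = rTensor H (Δ k H) X * rTensor H (Δ k H) Y := by
  induction X using TensorProduct.induction_on with
  | zero => simp
  | add x y hx hy => simp [add_mul, hx, hy]
  | tmul a b =>
    induction Y using TensorProduct.induction_on with
    | zero => simp
    | add x y hx hy => simp [mul_add, hx, hy]
    | tmul c d => simp [Algebra.TensorProduct.tmul_mul_tmul, Δ_mul]

lemma rTensorΔ_one : rTensor H (Δ k H) (1 : H ⊗[k] H) = 1 := by
  simp [Algebra.TensorProduct.one_def, Δ_one]

lemma assoc3_tmul_mul (M N : H ⊗[k] H) (c d : H) :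
    TensorProduct.assoc k H H H ((M * N) ⊗ₜ[k] (c * d))
      = TensorProduct.assoc k H H H (M ⊗ₜ[k] c) * TensorProduct.assoc k H H H (N ⊗ₜ[k] d) := by
  induction M using TensorProduct.induction_on with
  | zero => simp
  | add x y hx hy => simp [add_mul, add_tmul, hx, hy]
  | tmul a b =>
    induction N using TensorProduct.induction_on with
    | zero => simp
    | add x y hx hy => simp [mul_add, add_tmul, hx, hy]
    | tmul p q => simp [Algebra.TensorProduct.tmul_mul_tmul]

lemma assoc3_mul (X Y : (H ⊗[k] H) ⊗[k] H) :
    TensorProduct.assoc k H H H (X * Y)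
      = TensorProduct.assoc k H H H X * TensorProduct.assoc k H H H Y := by
  induction X using TensorProduct.induction_on with
  | zero => simp
  | add x y hx hy => simp [add_mul, hx, hy]
  | tmul M c =>
    induction Y using TensorProduct.induction_on with
    | zero => simp
    | add x y hx hy => simp [mul_add, hx, hy]
    | tmul N d =>
      simpa [Algebra.TensorProduct.tmul_mul_tmul] using assoc3_tmul_mul M N c d

lemma assoc3_one : TensorProduct.assoc k H H H (1 : (H ⊗[k] H) ⊗[k] H) = 1 := by
  simp [Algebra.TensorProduct.one_def]

variable (k) in
lemma mulLeft_add' {A : Type} [Ring A] [Algebra k A] (a b : A) :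
    mulLeft k (a + b) = mulLeft k a + mulLeft k b := by
  ext x; simp [add_mul]

variable (k) in
lemma mulLeft_smul' {A : Type} [Ring A] [Algebra k A] (c : k) (a : A) :
    mulLeft k (c • a) = c • mulLeft k a := by
  ext x; simp [smul_mul_assoc]

variable (k) in
lemma mulRight_add' {A : Type} [Ring A] [Algebra k A] (a b : A) :
    mulRight k (a + b) = mulRight k a + mulRight k b := by
  ext x; simp [mul_add]

variable (k) in
lemma mulRight_smul' {A : Type} [Ring A] [Algebra k A] (c : k) (a : A) :
    mulRight k (c • a) = c • mulRight k a := by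
  ext x; simp [mul_smul_comm]

/-- `actT ρ A X` for `X = ∑ a ⊗ b` is the operator `∑ (mulLeft a) ⊗ (ρ b)` on `A ⊗ V`. -/
def actT (ρ : H →ₗ[k] V →ₗ[k] V) (A : Type) [Ring A] [Algebra k A] :
    (A ⊗[k] H) →ₗ[k] (A ⊗[k] V) →ₗ[k] (A ⊗[k] V) :=
  TensorProduct.homTensorHomMap (σ₁₂ := RingHom.id k) (M := A) (N := V) (M₂ := A) (N₂ := V) ∘ₗ TensorProduct.map (LinearMap.mul k A) ρ

@[simp] lemma actT_tmul (ρ : H →ₗ[k] V →ₗ[k] V) (A : Type) [Ring A] [Algebra k A]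
    (a : A) (b : H) :
    actT ρ A (a ⊗ₜ[k] b) = TensorProduct.map (mulLeft k a) (ρ b) := by
  have : LinearMap.mul k A a = mulLeft k a := by ext x; simp
  simp [actT, this]

/-- `cG X = ∑ rTensor (mulRight b) ∘ β ∘ ρ a` for `X = ∑ a ⊗ b`. -/
def cG (ρ : H →ₗ[k] V →ₗ[k] V) (β : V →ₗ[k] H ⊗[k] V) :
    (H ⊗[k] H) →ₗ[k] V →ₗ[k] H ⊗[k] V :=
  TensorProduct.lift <| LinearMap.mk₂ k
    (fun a b => LinearMap.rTensor V (mulRight k b) ∘ₗ β ∘ₗ ρ a)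
    (by intro a a' b; ext w; simp)
    (by intro c a b; ext w; simp)
    (by intro a b b'; ext w; simp [mulRight_add' k, rTensor_add])
    (by intro c a b; ext w; simp [mulRight_smul' k, rTensor_smul])

@[simp] lemma cG_tmul (ρ : H →ₗ[k] V →ₗ[k] V) (β : V →ₗ[k] H ⊗[k] V) (a b : H) (w : V) :
    cG ρ β (a ⊗ₜ[k] b) w = LinearMap.rTensor V (mulRight k b) (β (ρ a w)) := by
  simp [cG]

/-- `cF X = ∑ (mulLeft a ⊗ ρ b) ∘ β` for `X = ∑ a ⊗ b`. -/
def cF (ρ : H →ₗ[k] V →ₗ[k] V) (β : V →ₗ[k] H ⊗[k] V) :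
    (H ⊗[k] H) →ₗ[k] V →ₗ[k] H ⊗[k] V :=
  TensorProduct.lift <| LinearMap.mk₂ k
    (fun a b => TensorProduct.map (mulLeft k a) (ρ b) ∘ₗ β)
    (by intro a a' b; ext w; simp [mulLeft_add' k, TensorProduct.map_add_left])
    (by intro c a b; ext w; simp [mulLeft_smul' k, TensorProduct.map_smul_left])
    (by intro a b b'; ext w; simp [TensorProduct.map_add_right])
    (by intro c a b; ext w; simp [TensorProduct.map_smul_right])

@[simp] lemma cF_tmul (ρ : H →ₗ[k] V →ₗ[k] V) (β : V →ₗ[k] H ⊗[k] V) (a b : H) (w : V) :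
    cF ρ β (a ⊗ₜ[k] b) w = TensorProduct.map (mulLeft k a) (ρ b) (β w) := by
  simp [cF]

/-- `thR D` for `D = ∑ c ⊗ d` is `∑ (mulRight c) ⊗ (rTensor (mulRight d))` on `H ⊗ (H ⊗ V)`. -/
def thR : (H ⊗[k] H) →ₗ[k] (H ⊗[k] (H ⊗[k] V)) →ₗ[k] (H ⊗[k] (H ⊗[k] V)) :=
  TensorProduct.lift <| LinearMap.mk₂ k
    (fun c d => TensorProduct.map (mulRight k c) (LinearMap.rTensor V (mulRight k d)))
    (by intro a a' b; simp [mulRight_add' k, TensorProduct.map_add_left])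
    (by intro c a b; simp [mulRight_smul' k, TensorProduct.map_smul_left])
    (by intro a b b'; simp [mulRight_add' k, rTensor_add, TensorProduct.map_add_right])
    (by intro c a b; simp [mulRight_smul' k, rTensor_smul, TensorProduct.map_smul_right])

@[simp] lemma thR_tmul (c d : H) :
    thR (V := V) (c ⊗ₜ[k] d)
      = TensorProduct.map (mulRight k c) (LinearMap.rTensor V (mulRight k d)) := by
  simp [thR]

/-- `thR2 D f = ∑ rTensor (mulRight d) ∘ f ∘ ρ c` for `D = ∑ c ⊗ d`. -/
def thR2 (ρ : H →ₗ[k] V →ₗ[k] V) :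
    (H ⊗[k] H) →ₗ[k] (V →ₗ[k] H ⊗[k] V) →ₗ[k] (V →ₗ[k] H ⊗[k] V) :=
  TensorProduct.lift <| LinearMap.mk₂ k
    (fun c d => (LinearMap.llcomp k V (H ⊗[k] V) (H ⊗[k] V)
        (LinearMap.rTensor V (mulRight k d))) ∘ₗ (LinearMap.lcomp k (H ⊗[k] V) (ρ c)))
    (by intro a a' b; ext f w; simp)
    (by intro c a b; ext f w; simp)
    (by intro a b b'; ext f w; simp [mulRight_add' k, rTensor_add])
    (by intro c a b; ext f w; simp [mulRight_smul' k, rTensor_smul])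

@[simp] lemma thR2_tmul (ρ : H →ₗ[k] V →ₗ[k] V) (c d : H) (f : V →ₗ[k] H ⊗[k] V) (w : V) :
    thR2 ρ (c ⊗ₜ[k] d) f w = LinearMap.rTensor V (mulRight k d) (f (ρ c w)) := by
  simp [thR2]

/-- `thT3 ξ` for `ξ = ∑ p ⊗ X` is `∑ (mulLeft p) ⊗ (actT ρ H X)` on `H ⊗ (H ⊗ V)`. -/
def thT3 (ρ : H →ₗ[k] V →ₗ[k] V) :
    (H ⊗[k] (H ⊗[k] H)) →ₗ[k] (H ⊗[k] (H ⊗[k] V)) →ₗ[k] (H ⊗[k] (H ⊗[k] V)) :=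
  TensorProduct.homTensorHomMap (σ₁₂ := RingHom.id k) (M := H) (N := H ⊗[k] V) (M₂ := H) (N₂ := H ⊗[k] V) ∘ₗ
    TensorProduct.map (LinearMap.mul k H) (actT ρ H)

@[simp] lemma thT3_tmul (ρ : H →ₗ[k] V →ₗ[k] V) (p : H) (X : H ⊗[k] H) :
    thT3 ρ (p ⊗ₜ[k] X) = TensorProduct.map (mulLeft k p) (actT ρ H X) := by
  have : LinearMap.mul k H p = mulLeft k p := by ext x; simp
  simp [thT3, this]

/-- `phiM χ ξ` for `ξ = ∑ p ⊗ X` is `∑ map (mulLeft p) (actT ρ H χ ∘ cG X)`. -/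
def phiM (ρ : H →ₗ[k] V →ₗ[k] V) (β : V →ₗ[k] H ⊗[k] V) (χ : H ⊗[k] H) :
    (H ⊗[k] (H ⊗[k] H)) →ₗ[k] (H ⊗[k] V) →ₗ[k] (H ⊗[k] (H ⊗[k] V)) :=
  TensorProduct.homTensorHomMap (σ₁₂ := RingHom.id k) (M := H) (N := V) (M₂ := H) (N₂ := H ⊗[k] V) ∘ₗ
    TensorProduct.map (LinearMap.mul k H)
      ((LinearMap.llcomp k V (H ⊗[k] V) (H ⊗[k] V) (actT ρ H χ)) ∘ₗ cG ρ β)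

@[simp] lemma phiM_tmul (ρ : H →ₗ[k] V →ₗ[k] V) (β : V →ₗ[k] H ⊗[k] V) (χ : H ⊗[k] H)
    (p : H) (X : H ⊗[k] H) :
    phiM ρ β χ (p ⊗ₜ[k] X) = TensorProduct.map (mulLeft k p) (actT ρ H χ ∘ₗ cG ρ β X) := by
  have : LinearMap.mul k H p = mulLeft k p := by ext x; simp
  simp [phiM, this]
  rfl


variable (ρ : H →ₗ[k] V →ₗ[k] V) (β : V →ₗ[k] H ⊗[k] V)

lemma actT_mul {A : Type} [Ring A] [Algebra k A]
    (hmul : ∀ (g h : H) (w : V), ρ (g * h) w = ρ g (ρ h w))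
    (X Y : A ⊗[k] H) (t : A ⊗[k] V) :
    actT ρ A (X * Y) t = actT ρ A X (actT ρ A Y t) := by
  induction X using TensorProduct.induction_on with
  | zero => simp
  | add x y hx hy => simp only [add_mul, mul_add, tmul_add, add_tmul, LinearMap.comp_add, LinearMap.add_comp, TensorProduct.map_add_right, TensorProduct.map_add_left, lTensor_add, rTensor_add, mulLeft_add' k, mulRight_add' k, map_add, LinearMap.add_apply, hx, hy]
  | tmul a b =>
    induction Y using TensorProduct.induction_on with
    | zero => simp
    | add x y hx hy => simp only [add_mul, mul_add, tmul_add, add_tmul, LinearMap.comp_add, LinearMap.add_comp, TensorProduct.map_add_right, TensorProduct.map_add_left, lTensor_add, rTensor_add, mulLeft_add' k, mulRight_add' k, map_add, LinearMap.add_apply, hx, hy]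
    | tmul c d =>
      induction t using TensorProduct.induction_on with
      | zero => simp
      | add x y hx hy => simp only [add_mul, mul_add, tmul_add, add_tmul, LinearMap.comp_add, LinearMap.add_comp, TensorProduct.map_add_right, TensorProduct.map_add_left, lTensor_add, rTensor_add, mulLeft_add' k, mulRight_add' k, map_add, LinearMap.add_apply, hx, hy]
      | tmul m n => simp [Algebra.TensorProduct.tmul_mul_tmul, mul_assoc, hmul]

lemma actT_mulRight_comm {A : Type} [Ring A] [Algebra k A]
    (P : A ⊗[k] H) (Y : A) (t : A ⊗[k] V) :
    actT ρ A P (rTensor V (mulRight k Y) t) = rTensor V (mulRight k Y) (actT ρ A P t) := by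
  induction P using TensorProduct.induction_on with
  | zero => simp
  | add x y hx hy => simp only [add_mul, mul_add, tmul_add, add_tmul, LinearMap.comp_add, LinearMap.add_comp, TensorProduct.map_add_right, TensorProduct.map_add_left, lTensor_add, rTensor_add, mulLeft_add' k, mulRight_add' k, map_add, LinearMap.add_apply, hx, hy]
  | tmul a b =>
    induction t using TensorProduct.induction_on with
    | zero => simp
    | add x y hx hy => simp only [add_mul, mul_add, tmul_add, add_tmul, LinearMap.comp_add, LinearMap.add_comp, TensorProduct.map_add_right, TensorProduct.map_add_left, lTensor_add, rTensor_add, mulLeft_add' k, mulRight_add' k, map_add, LinearMap.add_apply, hx, hy]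
    | tmul m n => simp [mul_assoc]

lemma rTensorΔ_actT (X : H ⊗[k] H) (t : H ⊗[k] V) :
    rTensor V (Δ k H) (actT ρ H X t)
      = actT ρ (H ⊗[k] H) (rTensor H (Δ k H) X) (rTensor V (Δ k H) t) := by
  induction X using TensorProduct.induction_on with
  | zero => simp
  | add x y hx hy => simp only [add_mul, mul_add, tmul_add, add_tmul, LinearMap.comp_add, LinearMap.add_comp, TensorProduct.map_add_right, TensorProduct.map_add_left, lTensor_add, rTensor_add, mulLeft_add' k, mulRight_add' k, map_add, LinearMap.add_apply, hx, hy]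
  | tmul a b =>
    induction t using TensorProduct.induction_on with
    | zero => simp
    | add x y hx hy => simp only [add_mul, mul_add, tmul_add, add_tmul, LinearMap.comp_add, LinearMap.add_comp, TensorProduct.map_add_right, TensorProduct.map_add_left, lTensor_add, rTensor_add, mulLeft_add' k, mulRight_add' k, map_add, LinearMap.add_apply, hx, hy]
    | tmul m n => simp [Δ_mul]

lemma actT_tmul_one {A : Type} [Ring A] [Algebra k A]
    (hone : ∀ w : V, ρ 1 w = w) (M : A) (t : A ⊗[k] V) :
    actT ρ A (M ⊗ₜ[k] (1 : H)) t = rTensor V (mulLeft k M) t := by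
  induction t using TensorProduct.induction_on with
  | zero => simp
  | add x y hx hy => simp only [add_mul, mul_add, tmul_add, add_tmul, LinearMap.comp_add, LinearMap.add_comp, TensorProduct.map_add_right, TensorProduct.map_add_left, lTensor_add, rTensor_add, mulLeft_add' k, mulRight_add' k, map_add, LinearMap.add_apply, hx, hy]
  | tmul m n => simp [hone]

lemma assoc_actT (ξ : H ⊗[k] (H ⊗[k] H)) (K : (H ⊗[k] H) ⊗[k] V) :
    TensorProduct.assoc k H H V
        (actT ρ (H ⊗[k] H) ((TensorProduct.assoc k H H H).symm ξ) K)
      = thT3 ρ ξ (TensorProduct.assoc k H H V K) := by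
  induction ξ using TensorProduct.induction_on with
  | zero => simp
  | add x y hx hy => simp only [add_mul, mul_add, tmul_add, add_tmul, LinearMap.comp_add, LinearMap.add_comp, TensorProduct.map_add_right, TensorProduct.map_add_left, lTensor_add, rTensor_add, mulLeft_add' k, mulRight_add' k, map_add, LinearMap.add_apply, hx, hy]
  | tmul p X =>
    induction X using TensorProduct.induction_on with
    | zero => simp
    | add x y hx hy => simp only [add_mul, mul_add, tmul_add, add_tmul, LinearMap.comp_add, LinearMap.add_comp, TensorProduct.map_add_right, TensorProduct.map_add_left, lTensor_add, rTensor_add, mulLeft_add' k, mulRight_add' k, map_add, LinearMap.add_apply, hx, hy]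
    | tmul q r =>
      induction K using TensorProduct.induction_on with
      | zero => simp
      | add x y hx hy => simp only [add_mul, mul_add, tmul_add, add_tmul, LinearMap.comp_add, LinearMap.add_comp, TensorProduct.map_add_right, TensorProduct.map_add_left, lTensor_add, rTensor_add, mulLeft_add' k, mulRight_add' k, map_add, LinearMap.add_apply, hx, hy]
      | tmul κ n =>
        induction κ using TensorProduct.induction_on with
        | zero => simp [zero_tmul]
        | add x y hx hy => simp only [add_mul, mul_add, tmul_add, add_tmul, LinearMap.comp_add, LinearMap.add_comp, TensorProduct.map_add_right, TensorProduct.map_add_left, lTensor_add, rTensor_add, mulLeft_add' k, mulRight_add' k, map_add, LinearMap.add_apply, hx, hy]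
        | tmul m1 m2 => simp [Algebra.TensorProduct.tmul_mul_tmul]

lemma assoc_rTensor_mulRight (D : H ⊗[k] H) (T : H ⊗[k] (H ⊗[k] V)) :
    TensorProduct.assoc k H H V
        (rTensor V (mulRight k D) ((TensorProduct.assoc k H H V).symm T))
      = thR D T := by
  induction D using TensorProduct.induction_on with
  | zero => simp
  | add x y hx hy => simp only [add_mul, mul_add, tmul_add, add_tmul, LinearMap.comp_add, LinearMap.add_comp, TensorProduct.map_add_right, TensorProduct.map_add_left, lTensor_add, rTensor_add, mulLeft_add' k, mulRight_add' k, map_add, LinearMap.add_apply, hx, hy]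
  | tmul c d =>
    induction T using TensorProduct.induction_on with
    | zero => simp
    | add x y hx hy => simp only [add_mul, mul_add, tmul_add, add_tmul, LinearMap.comp_add, LinearMap.add_comp, TensorProduct.map_add_right, TensorProduct.map_add_left, lTensor_add, rTensor_add, mulLeft_add' k, mulRight_add' k, map_add, LinearMap.add_apply, hx, hy]
    | tmul m s =>
      induction s using TensorProduct.induction_on with
      | zero => simp [tmul_zero]
      | add x y hx hy => simp only [add_mul, mul_add, tmul_add, add_tmul, LinearMap.comp_add, LinearMap.add_comp, TensorProduct.map_add_right, TensorProduct.map_add_left, lTensor_add, rTensor_add, mulLeft_add' k, mulRight_add' k, map_add, LinearMap.add_apply, hx, hy]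
      | tmul m2 n => simp [Algebra.TensorProduct.tmul_mul_tmul]

lemma rTensorΔ_rTensor_mulRight (d : H) (t : H ⊗[k] V) :
    rTensor V (Δ k H) (rTensor V (mulRight k d) t)
      = rTensor V (mulRight k (Δ k H d)) (rTensor V (Δ k H) t) := by
  induction t using TensorProduct.induction_on with
  | zero => simp
  | add x y hx hy => simp only [add_mul, mul_add, tmul_add, add_tmul, LinearMap.comp_add, LinearMap.add_comp, TensorProduct.map_add_right, TensorProduct.map_add_left, lTensor_add, rTensor_add, mulLeft_add' k, mulRight_add' k, map_add, LinearMap.add_apply, hx, hy]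
  | tmul m n => simp [Δ_mul]

lemma compat'
    (hcompat : ∀ (h : H) (w : V) (ι : Type) (s : Finset ι) (h1 h2 : ι → H),
      Δ k H h = ∑ i ∈ s, h1 i ⊗ₜ[k] h2 i →
      ∑ i ∈ s, (TensorProduct.map (LinearMap.mulLeft k (h1 i)) (ρ (h2 i))) (β w)
        = ∑ i ∈ s, (LinearMap.rTensor V (LinearMap.mulRight k (h2 i))) (β (ρ (h1 i) w)))
    (h : H) : cF ρ β (Δ k H h) = cG ρ β (Δ k H h) := by
  apply LinearMap.ext; intro w
  obtain ⟨S, hS⟩ := TensorProduct.exists_finset (Δ k H h)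
  have := hcompat h w (H × H) S (fun p => p.1) (fun p => p.2) hS
  rw [hS]
  simpa [map_sum, LinearMap.sum_apply] using this

lemma actT_beta (X : H ⊗[k] H) (w : V) :
    actT ρ H X (β w) = cF ρ β X w := by
  induction X using TensorProduct.induction_on with
  | zero => simp
  | add x y hx hy => simp only [add_mul, mul_add, tmul_add, add_tmul, LinearMap.comp_add, LinearMap.add_comp, TensorProduct.map_add_right, TensorProduct.map_add_left, lTensor_add, rTensor_add, mulLeft_add' k, mulRight_add' k, map_add, LinearMap.add_apply, hx, hy]
  | tmul a b => simp

lemma step_compat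
    (hmul : ∀ (g h : H) (w : V), ρ (g * h) w = ρ g (ρ h w))
    (hFG : ∀ h : H, cF ρ β (Δ k H h) = cG ρ β (Δ k H h))
    (χ : H ⊗[k] H) (p h : H) (D : H ⊗[k] H) (t : H ⊗[k] V) :
    TensorProduct.map (mulLeft k p) (actT ρ H (χ * Δ k H h)) (thR D (lTensor H β t))
      = TensorProduct.map (mulLeft k p) (actT ρ H χ)
          (thR D (lTensor H (cG ρ β (Δ k H h)) t)) := by
  induction D using TensorProduct.induction_on with
  | zero => simp
  | add x y hx hy => simp only [add_mul, mul_add, tmul_add, add_tmul, LinearMap.comp_add, LinearMap.add_comp, TensorProduct.map_add_right, TensorProduct.map_add_left, lTensor_add, rTensor_add, mulLeft_add' k, mulRight_add' k, map_add, LinearMap.add_apply, hx, hy]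
  | tmul c d =>
    induction t using TensorProduct.induction_on with
    | zero => simp
    | add x y hx hy => simp only [add_mul, mul_add, tmul_add, add_tmul, LinearMap.comp_add, LinearMap.add_comp, TensorProduct.map_add_right, TensorProduct.map_add_left, lTensor_add, rTensor_add, mulLeft_add' k, mulRight_add' k, map_add, LinearMap.add_apply, hx, hy]
    | tmul m n =>
      simp only [lTensor_tmul, thR_tmul, map_tmul]
      congr 1
      rw [actT_mul ρ hmul, actT_mulRight_comm, actT_beta, hFG]

def omM (χ : H ⊗[k] H) (v : V) (p : H) (X2 : H ⊗[k] H) :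
    (H ⊗[k] (H ⊗[k] H)) →ₗ[k] H ⊗[k] (H ⊗[k] V) :=
  TensorProduct.lift <| LinearMap.mk₂ k
    (fun c D => TensorProduct.map (mulLeft k p) (actT ρ H χ)
      (thR D (lTensor H (cG ρ β X2) (β (ρ c v)))))
    (by intro a a' b; simp [map_add])
    (by intro c a b; simp)
    (by intro a b b'; simp [map_add, LinearMap.add_apply])
    (by intro c a b; simp)

@[simp] lemma omM_tmul (χ : H ⊗[k] H) (v : V) (p : H) (X2 : H ⊗[k] H)
    (c : H) (D : H ⊗[k] H) :
    omM ρ β χ v p X2 (c ⊗ₜ[k] D)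
      = TensorProduct.map (mulLeft k p) (actT ρ H χ)
          (thR D (lTensor H (cG ρ β X2) (β (ρ c v)))) := by
  simp [omM]

lemma omM_assoc3 (χ : H ⊗[k] H) (v : V) (p : H) (X2 : H ⊗[k] H)
    (D : H ⊗[k] H) (s : H) :
    omM ρ β χ v p X2 (TensorProduct.assoc k H H H (D ⊗ₜ[k] s))
      = TensorProduct.map (mulLeft k p)
          (actT ρ H χ ∘ₗ rTensor V (mulRight k s) ∘ₗ cG ρ β X2) (cG ρ β D v) := by
  induction D using TensorProduct.induction_on with
  | zero => simp
  | add x y hx hy => simp only [add_mul, mul_add, tmul_add, add_tmul, LinearMap.comp_add, LinearMap.add_comp, TensorProduct.map_add_right, TensorProduct.map_add_left, lTensor_add, rTensor_add, mulLeft_add' k, mulRight_add' k, map_add, LinearMap.add_apply, hx, hy]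
  | tmul c e =>
    have key : ∀ t : H ⊗[k] V,
        TensorProduct.map (mulLeft k p) (actT ρ H χ)
            (thR (e ⊗ₜ[k] s) (lTensor H (cG ρ β X2) t))
          = TensorProduct.map (mulLeft k p)
              (actT ρ H χ ∘ₗ rTensor V (mulRight k s) ∘ₗ cG ρ β X2)
              (rTensor V (mulRight k e) t) := by
      intro t
      induction t using TensorProduct.induction_on with
      | zero => simp
      | add x y hx hy => simp only [add_mul, mul_add, tmul_add, add_tmul, LinearMap.comp_add, LinearMap.add_comp, TensorProduct.map_add_right, TensorProduct.map_add_left, lTensor_add, rTensor_add, mulLeft_add' k, mulRight_add' k, map_add, LinearMap.add_apply, hx, hy]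
      | tmul m n => simp
    simpa using key (β (ρ c v))

lemma cG_mul (hmul : ∀ (g h : H) (w : V), ρ (g * h) w = ρ g (ρ h w))
    (X Y : H ⊗[k] H) (w : V) :
    cG ρ β (X * Y) w = thR2 ρ Y (cG ρ β X) w := by
  induction X using TensorProduct.induction_on with
  | zero => simp
  | add x y hx hy => simp only [add_mul, mul_add, tmul_add, add_tmul, LinearMap.comp_add, LinearMap.add_comp, TensorProduct.map_add_right, TensorProduct.map_add_left, lTensor_add, rTensor_add, mulLeft_add' k, mulRight_add' k, map_add, LinearMap.add_apply, hx, hy]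
  | tmul a b =>
    induction Y using TensorProduct.induction_on with
    | zero => simp
    | add x y hx hy => simp only [add_mul, mul_add, tmul_add, add_tmul, LinearMap.comp_add, LinearMap.add_comp, TensorProduct.map_add_right, TensorProduct.map_add_left, lTensor_add, rTensor_add, mulLeft_add' k, mulRight_add' k, map_add, LinearMap.add_apply, hx, hy]
    | tmul c d =>
      simp [Algebra.TensorProduct.tmul_mul_tmul, hmul, mulRight_mul, rTensor_comp,
        LinearMap.comp_apply]

lemma thR2_cF (X Y : H ⊗[k] H) (w : V) :
    thR2 ρ Y (cF ρ β X) w = actT ρ H X (cG ρ β Y w) := by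
  induction X using TensorProduct.induction_on with
  | zero => simp
  | add x y hx hy => simp only [add_mul, mul_add, tmul_add, add_tmul, LinearMap.comp_add, LinearMap.add_comp, TensorProduct.map_add_right, TensorProduct.map_add_left, lTensor_add, rTensor_add, mulLeft_add' k, mulRight_add' k, map_add, LinearMap.add_apply, hx, hy]
  | tmul a b =>
    induction Y using TensorProduct.induction_on with
    | zero => simp
    | add x y hx hy => simp only [add_mul, mul_add, tmul_add, add_tmul, LinearMap.comp_add, LinearMap.add_comp, TensorProduct.map_add_right, TensorProduct.map_add_left, lTensor_add, rTensor_add, mulLeft_add' k, mulRight_add' k, map_add, LinearMap.add_apply, hx, hy]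
    | tmul c d =>
      have key : ∀ t : H ⊗[k] V,
          rTensor V (mulRight k d) (TensorProduct.map (mulLeft k a) (ρ b) t)
            = TensorProduct.map (mulLeft k a) (ρ b) (rTensor V (mulRight k d) t) := by
        intro t
        induction t using TensorProduct.induction_on with
        | zero => simp
        | add x y hx hy => simp only [add_mul, mul_add, tmul_add, add_tmul, LinearMap.comp_add, LinearMap.add_comp, TensorProduct.map_add_right, TensorProduct.map_add_left, lTensor_add, rTensor_add, mulLeft_add' k, mulRight_add' k, map_add, LinearMap.add_apply, hx, hy]
        | tmul m n => simp [mul_assoc]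
      simpa using key (β (ρ c w))

lemma cG_Δmul (hmul : ∀ (g h : H) (w : V), ρ (g * h) w = ρ g (ρ h w))
    (hFG : ∀ h : H, cF ρ β (Δ k H h) = cG ρ β (Δ k H h))
    (h : H) (Y : H ⊗[k] H) (w : V) :
    cG ρ β (Δ k H h * Y) w = actT ρ H (Δ k H h) (cG ρ β Y w) := by
  rw [cG_mul ρ β hmul, ← hFG, thR2_cF]

lemma stepN (hmul : ∀ (g h : H) (w : V), ρ (g * h) w = ρ g (ρ h w))
    (χ : H ⊗[k] H) (a s : H) (X Y : H ⊗[k] H) (t : H ⊗[k] V) :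
    TensorProduct.map (mulLeft k a)
        (actT ρ H χ ∘ₗ rTensor V (mulRight k s) ∘ₗ cG ρ β X) (actT ρ H Y t)
      = phiM ρ β χ ((a ⊗ₜ[k] X) * (TensorProduct.assoc k H H H (Y ⊗ₜ[k] s))) t := by
  induction X using TensorProduct.induction_on with
  | zero => simp [tmul_zero]
  | add x y hx hy => simp only [add_mul, mul_add, tmul_add, add_tmul, LinearMap.comp_add, LinearMap.add_comp, TensorProduct.map_add_right, TensorProduct.map_add_left, lTensor_add, rTensor_add, mulLeft_add' k, mulRight_add' k, map_add, LinearMap.add_apply, hx, hy]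
  | tmul b c =>
    induction Y using TensorProduct.induction_on with
    | zero => simp [zero_tmul]
    | add x y hx hy => simp only [add_mul, mul_add, tmul_add, add_tmul, LinearMap.comp_add, LinearMap.add_comp, TensorProduct.map_add_right, TensorProduct.map_add_left, lTensor_add, rTensor_add, mulLeft_add' k, mulRight_add' k, map_add, LinearMap.add_apply, hx, hy]
    | tmul p q =>
      induction t using TensorProduct.induction_on with
      | zero => simp
      | add x y hx hy => simp only [add_mul, mul_add, tmul_add, add_tmul, LinearMap.comp_add, LinearMap.add_comp, TensorProduct.map_add_right, TensorProduct.map_add_left, lTensor_add, rTensor_add, mulLeft_add' k, mulRight_add' k, map_add, LinearMap.add_apply, hx, hy]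
      | tmul m n =>
        simp [Algebra.TensorProduct.tmul_mul_tmul, hmul, mul_assoc, mulRight_mul,
          rTensor_comp, LinearMap.comp_apply]

lemma stepP (hmul : ∀ (g h : H) (w : V), ρ (g * h) w = ρ g (ρ h w))
    (χ X Y : H ⊗[k] H) (t : H ⊗[k] V) :
    lTensor H (actT ρ H χ ∘ₗ cG ρ β Y) (actT ρ H X t)
      = phiM ρ β χ ((1 ⊗ₜ[k] Y) * (TensorProduct.assoc k H H H (X ⊗ₜ[k] 1))) t := by
  induction X using TensorProduct.induction_on with
  | zero => simp [zero_tmul]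
  | add x y hx hy => simp only [add_mul, mul_add, tmul_add, add_tmul, LinearMap.comp_add, LinearMap.add_comp, TensorProduct.map_add_right, TensorProduct.map_add_left, lTensor_add, rTensor_add, mulLeft_add' k, mulRight_add' k, map_add, LinearMap.add_apply, hx, hy]
  | tmul p q =>
    induction Y using TensorProduct.induction_on with
    | zero => simp [tmul_zero]
    | add x y hx hy => simp only [add_mul, mul_add, tmul_add, add_tmul, LinearMap.comp_add, LinearMap.add_comp, TensorProduct.map_add_right, TensorProduct.map_add_left, lTensor_add, rTensor_add, mulLeft_add' k, mulRight_add' k, map_add, LinearMap.add_apply, hx, hy]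
    | tmul c d =>
      induction t using TensorProduct.induction_on with
      | zero => simp
      | add x y hx hy => simp only [add_mul, mul_add, tmul_add, add_tmul, LinearMap.comp_add, LinearMap.add_comp, TensorProduct.map_add_right, TensorProduct.map_add_left, lTensor_add, rTensor_add, mulLeft_add' k, mulRight_add' k, map_add, LinearMap.add_apply, hx, hy]
      | tmul m n =>
        simp [Algebra.TensorProduct.tmul_mul_tmul, hmul]

section Cocycle

lemma tmul_one_mul_tmul_one (X Y : H ⊗[k] H) :
    ((1:H) ⊗ₜ[k] X) * ((1:H) ⊗ₜ[k] Y) = (1:H) ⊗ₜ[k] (X * Y) := by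
  simp [Algebra.TensorProduct.tmul_mul_tmul]

lemma one_tmul_mul_one_tmul (X Y : H ⊗[k] H) :
    (X ⊗ₜ[k] (1:H)) * (Y ⊗ₜ[k] (1:H)) = (X * Y) ⊗ₜ[k] (1:H) := by
  simp [Algebra.TensorProduct.tmul_mul_tmul]

variable (χ χ' : H ⊗[k] H) (h1 : χ * χ' = 1) (h2 : χ' * χ = 1)

include h1 h2 in
lemma invcoc
    (hcoc : (1 ⊗ₜ[k] χ) * (lTensor H (Δ k H) χ)
      = TensorProduct.assoc k H H H ((χ ⊗ₜ[k] 1) * (rTensor H (Δ k H) χ))) :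
    lTensor H (Δ k H) χ' * ((1:H) ⊗ₜ[k] χ')
      = TensorProduct.assoc k H H H (rTensor H (Δ k H) χ' * (χ' ⊗ₜ[k] (1:H))) := by
  have haa' : ((1:H) ⊗ₜ[k] χ) * ((1:H) ⊗ₜ[k] χ') = 1 := by
    rw [tmul_one_mul_tmul_one, h1]; simp [Algebra.TensorProduct.one_def]
  have ha'a : ((1:H) ⊗ₜ[k] χ') * ((1:H) ⊗ₜ[k] χ) = 1 := by
    rw [tmul_one_mul_tmul_one, h2]; simp [Algebra.TensorProduct.one_def]
  have hLL' : lTensor H (Δ k H) χ * lTensor H (Δ k H) χ' = 1 := by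
    rw [← lTensorΔ_mul, h1, lTensorΔ_one]
  have hL'L : lTensor H (Δ k H) χ' * lTensor H (Δ k H) χ = 1 := by
    rw [← lTensorΔ_mul, h2, lTensorΔ_one]
  have hRR' : rTensor H (Δ k H) χ * rTensor H (Δ k H) χ' = 1 := by
    rw [← rTensorΔ_mul, h1, rTensorΔ_one]
  have hbb' : ((χ ⊗ₜ[k] (1:H)) * rTensor H (Δ k H) χ)
      * (rTensor H (Δ k H) χ' * (χ' ⊗ₜ[k] (1:H))) = 1 := by
    calc (χ ⊗ₜ[k] (1:H)) * rTensor H (Δ k H) χ * (rTensor H (Δ k H) χ' * (χ' ⊗ₜ[k] (1:H)))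
        = (χ ⊗ₜ[k] (1:H)) * (rTensor H (Δ k H) χ * rTensor H (Δ k H) χ') * (χ' ⊗ₜ[k] (1:H)) := by
          rw [mul_assoc, mul_assoc, mul_assoc]
      _ = 1 := by rw [hRR', mul_one, one_tmul_mul_one_tmul, h1]
                  simp [Algebra.TensorProduct.one_def]
  have hA'A : (lTensor H (Δ k H) χ' * ((1:H) ⊗ₜ[k] χ'))
      * (((1:H) ⊗ₜ[k] χ) * lTensor H (Δ k H) χ) = 1 := by
    calc lTensor H (Δ k H) χ' * ((1:H) ⊗ₜ[k] χ') * (((1:H) ⊗ₜ[k] χ) * lTensor H (Δ k H) χ)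
        = lTensor H (Δ k H) χ' * (((1:H) ⊗ₜ[k] χ') * ((1:H) ⊗ₜ[k] χ)) * lTensor H (Δ k H) χ := by
          rw [mul_assoc, mul_assoc, mul_assoc]
      _ = 1 := by rw [ha'a, mul_one, hL'L]
  have h3 : (((1:H) ⊗ₜ[k] χ) * lTensor H (Δ k H) χ)
      * TensorProduct.assoc k H H H (rTensor H (Δ k H) χ' * (χ' ⊗ₜ[k] (1:H))) = 1 := by
    rw [hcoc, ← assoc3_mul, hbb', assoc3_one]
  calc lTensor H (Δ k H) χ' * ((1:H) ⊗ₜ[k] χ')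
      = lTensor H (Δ k H) χ' * ((1:H) ⊗ₜ[k] χ')
        * ((((1:H) ⊗ₜ[k] χ) * lTensor H (Δ k H) χ)
          * TensorProduct.assoc k H H H (rTensor H (Δ k H) χ' * (χ' ⊗ₜ[k] (1:H)))) := by
        rw [h3, mul_one]
    _ = (lTensor H (Δ k H) χ' * ((1:H) ⊗ₜ[k] χ')
          * (((1:H) ⊗ₜ[k] χ) * lTensor H (Δ k H) χ))
        * TensorProduct.assoc k H H H (rTensor H (Δ k H) χ' * (χ' ⊗ₜ[k] (1:H))) := by
        simp [mul_assoc]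
    _ = TensorProduct.assoc k H H H (rTensor H (Δ k H) χ' * (χ' ⊗ₜ[k] (1:H))) := by
        rw [hA'A, one_mul]

include h1 h2 in
lemma step8
    (hcoc : (1 ⊗ₜ[k] χ) * (lTensor H (Δ k H) χ)
      = TensorProduct.assoc k H H H ((χ ⊗ₜ[k] 1) * (rTensor H (Δ k H) χ))) :
    lTensor H (Δ k H) χ * TensorProduct.assoc k H H H (rTensor H (Δ k H) χ')
      = (((1:H) ⊗ₜ[k] χ') * TensorProduct.assoc k H H H (χ ⊗ₜ[k] (1:H))) := by
  have ha'a : ((1:H) ⊗ₜ[k] χ') * ((1:H) ⊗ₜ[k] χ) = 1 := by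
    rw [tmul_one_mul_tmul_one, h2]; simp [Algebra.TensorProduct.one_def]
  have hRR' : rTensor H (Δ k H) χ * rTensor H (Δ k H) χ' = 1 := by
    rw [← rTensorΔ_mul, h1, rTensorΔ_one]
  have hL : lTensor H (Δ k H) χ
      = ((1:H) ⊗ₜ[k] χ') * (((1:H) ⊗ₜ[k] χ) * lTensor H (Δ k H) χ) := by
    rw [← mul_assoc, ha'a, one_mul]
  calc lTensor H (Δ k H) χ * TensorProduct.assoc k H H H (rTensor H (Δ k H) χ')
      = ((1:H) ⊗ₜ[k] χ') * (TensorProduct.assoc k H H H ((χ ⊗ₜ[k] 1) * rTensor H (Δ k H) χ)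
          * TensorProduct.assoc k H H H (rTensor H (Δ k H) χ')) := by
        rw [hL, hcoc, mul_assoc]
    _ = ((1:H) ⊗ₜ[k] χ') * TensorProduct.assoc k H H H
          ((χ ⊗ₜ[k] 1) * (rTensor H (Δ k H) χ * rTensor H (Δ k H) χ')) := by
        rw [← assoc3_mul, mul_assoc]
    _ = (((1:H) ⊗ₜ[k] χ') * TensorProduct.assoc k H H H (χ ⊗ₜ[k] (1:H))) := by
        rw [hRR', mul_one]

end Cocycle

section Counit

def eH : H ⊗[k] V →ₗ[k] V :=
  (TensorProduct.lid k V).toLinearMap ∘ₗ LinearMap.rTensor V (ε k H)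

@[simp] lemma eH_tmul (m : H) (n : V) : (eH (V := V)) (m ⊗ₜ[k] n) = ε k H m • n := by
  simp [eH]

lemma eH_actT (X : H ⊗[k] H) (t : H ⊗[k] V) :
    eH (actT ρ H X t)
      = ρ (TensorProduct.lid k H (rTensor H (ε k H) X)) (eH t) := by
  induction X using TensorProduct.induction_on with
  | zero => simp
  | add x y hx hy => simp only [map_add, LinearMap.add_apply, hx, hy]
  | tmul a b =>
    induction t using TensorProduct.induction_on with
    | zero => simp
    | add x y hx hy => simp only [map_add, hx, hy]
    | tmul m n => simp [ε_mul, mul_smul, smul_comm (ε k H m)]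

lemma eH_rTensor_mulRight (d : H) (t : H ⊗[k] V) :
    eH (rTensor V (mulRight k d) t) = ε k H d • eH t := by
  induction t using TensorProduct.induction_on with
  | zero => simp
  | add x y hx hy => simp only [map_add, smul_add, hx, hy]
  | tmul m n => simp [ε_mul, mul_comm, mul_smul]

lemma eH_cG
    (hcounit : ∀ w : V, (TensorProduct.lid k V) ((LinearMap.rTensor V (ε k H)) (β w)) = w)
    (Y : H ⊗[k] H) (w : V) :
    eH (cG ρ β Y w) = ρ (TensorProduct.rid k H (lTensor H (ε k H) Y)) w := by
  have heβ : ∀ w : V, eH (β w) = w := fun w => hcounit w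
  induction Y using TensorProduct.induction_on with
  | zero => simp
  | add x y hx hy => simp only [map_add, LinearMap.add_apply, hx, hy]
  | tmul c d => simp [eH_rTensor_mulRight, heβ]

lemma cR_mul (X Y : H ⊗[k] H) :
    TensorProduct.rid k H (lTensor H (ε k H) (X * Y))
      = TensorProduct.rid k H (lTensor H (ε k H) X)
        * TensorProduct.rid k H (lTensor H (ε k H) Y) := by
  induction X using TensorProduct.induction_on with
  | zero => simp
  | add x y hx hy => simp only [add_mul, map_add, hx, hy]
  | tmul a b =>
    induction Y using TensorProduct.induction_on with
    | zero => simp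
    | add x y hx hy => simp only [mul_add, map_add, hx, hy]
    | tmul c d =>
      simp only [Algebra.TensorProduct.tmul_mul_tmul, lTensor_tmul, ε_mul,
        TensorProduct.rid_tmul, smul_mul_assoc, mul_smul_comm, mul_smul]
      rw [smul_comm]

lemma cR_one : TensorProduct.rid k H (lTensor H (ε k H) (1 : H ⊗[k] H)) = 1 := by
  simp [Algebra.TensorProduct.one_def, ε_one]

lemma cR_inv (χ χ' : H ⊗[k] H) (h2 : χ' * χ = 1)
    (hεr : TensorProduct.rid k H (lTensor H (ε k H) χ) = 1) :
    TensorProduct.rid k H (lTensor H (ε k H) χ') = 1 := by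
  have := cR_mul (k := k) (H := H) χ' χ
  rw [h2, cR_one, hεr, mul_one] at this
  exact this.symm

end Counit

section Main

variable (χ χ' : H ⊗[k] H) {ι₁ ι₂ : Type} (s₁ : Finset ι₁) (x1 x2 : ι₁ → H)
  (s₂ : Finset ι₂) (y1 y2 : ι₂ → H)

lemma main1
    (hone : ∀ w : V, ρ 1 w = w)
    (hcounit : ∀ w : V, (TensorProduct.lid k V) ((LinearMap.rTensor V (ε k H)) (β w)) = w)
    (h2 : χ' * χ = 1)
    (hεl : TensorProduct.lid k H (rTensor H (ε k H) χ) = 1)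
    (hεr : TensorProduct.rid k H (lTensor H (ε k H) χ) = 1)
    (v : V) :
    (TensorProduct.lid k V)
        ((LinearMap.rTensor V (ε k H)) (actT ρ H χ (cG ρ β χ' v))) = v := by
  have : (TensorProduct.lid k V)
      ((LinearMap.rTensor V (ε k H)) (actT ρ H χ (cG ρ β χ' v)))
      = eH (actT ρ H χ (cG ρ β χ' v)) := rfl
  rw [this, eH_actT, hεl, hone, eH_cG ρ β hcounit, cR_inv χ χ' h2 hεr, hone]

lemma main2
    (hone : ∀ w : V, ρ 1 w = w)
    (hmul : ∀ (g h : H) (w : V), ρ (g * h) w = ρ g (ρ h w))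
    (hcoassoc : ∀ w : V, rTensor V (Δ k H) (β w)
      = (TensorProduct.assoc k H H V).symm (lTensor H β (β w)))
    (hFG : ∀ h : H, cF ρ β (Δ k H h) = cG ρ β (Δ k H h))
    (h1 : χ * χ' = 1) (h2 : χ' * χ = 1)
    (hcoc : (1 ⊗ₜ[k] χ) * (lTensor H (Δ k H) χ)
      = TensorProduct.assoc k H H H ((χ ⊗ₜ[k] 1) * (rTensor H (Δ k H) χ)))
    (hx : χ = ∑ i ∈ s₁, x1 i ⊗ₜ[k] x2 i) (hy : χ' = ∑ j ∈ s₂, y1 j ⊗ₜ[k] y2 j)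
    (v : V) :
    TensorProduct.assoc k H H V
        (rTensor V (mulLeft k χ ∘ₗ mulRight k χ' ∘ₗ Δ k H) (actT ρ H χ (cG ρ β χ' v)))
      = lTensor H (actT ρ H χ ∘ₗ cG ρ β χ') (actT ρ H χ (cG ρ β χ' v)) := by
  -- notation
  set Gv := cG ρ β χ' v with hGvdef
  have hGv : Gv = ∑ j ∈ s₂, rTensor V (mulRight k (y2 j)) (β (ρ (y1 j) v)) := by
    rw [hGvdef, hy]; simp [LinearMap.sum_apply]
  -- expansion of cocycle-type elements
  have hL : lTensor H (Δ k H) χ = ∑ i ∈ s₁, x1 i ⊗ₜ[k] Δ k H (x2 i) := by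
    rw [hx, map_sum]; rfl
  have hL' : lTensor H (Δ k H) χ' = ∑ j ∈ s₂, y1 j ⊗ₜ[k] Δ k H (y2 j) := by
    rw [hy, map_sum]; rfl
  have hR' : rTensor H (Δ k H) χ' = ∑ j ∈ s₂, Δ k H (y1 j) ⊗ₜ[k] y2 j := by
    rw [hy, map_sum]; rfl
  have hξa : ((1:H) ⊗ₜ[k] χ) * lTensor H (Δ k H) χ
      = ∑ i ∈ s₁, x1 i ⊗ₜ[k] (χ * Δ k H (x2 i)) := by
    rw [hL, Finset.mul_sum]
    exact Finset.sum_congr rfl fun i _ => by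
      rw [Algebra.TensorProduct.tmul_mul_tmul, one_mul]
  have hξb : lTensor H (Δ k H) χ' * ((1:H) ⊗ₜ[k] χ')
      = ∑ j ∈ s₂, y1 j ⊗ₜ[k] (Δ k H (y2 j) * χ') := by
    rw [hL', Finset.sum_mul]
    exact Finset.sum_congr rfl fun j _ => by
      rw [Algebra.TensorProduct.tmul_mul_tmul, mul_one]
  have hξc : rTensor H (Δ k H) χ' * (χ' ⊗ₜ[k] (1:H))
      = ∑ j ∈ s₂, (Δ k H (y1 j) * χ') ⊗ₜ[k] y2 j := by
    rw [hR', Finset.sum_mul]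
    exact Finset.sum_congr rfl fun j _ => by
      rw [Algebra.TensorProduct.tmul_mul_tmul, mul_one]
  -- step 1: split the twisted comultiplication
  have e1 : rTensor V (mulLeft k χ ∘ₗ mulRight k χ' ∘ₗ Δ k H) (actT ρ H χ Gv)
      = rTensor V (mulLeft k χ)
          (rTensor V (mulRight k χ') (rTensor V (Δ k H) (actT ρ H χ Gv))) := by
    rw [rTensor_comp, rTensor_comp]; rfl
  -- step 2: Δ is multiplicative
  have e2 : rTensor V (Δ k H) (actT ρ H χ Gv)
      = actT ρ (H ⊗[k] H) (rTensor H (Δ k H) χ) (rTensor V (Δ k H) Gv) :=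
    rTensorΔ_actT ρ χ Gv
  -- step 3: coassociativity of β
  have e3 : rTensor V (Δ k H) Gv
      = ∑ j ∈ s₂, rTensor V (mulRight k (Δ k H (y2 j)))
          ((TensorProduct.assoc k H H V).symm (lTensor H β (β (ρ (y1 j) v)))) := by
    rw [hGv, map_sum]
    exact Finset.sum_congr rfl fun j _ => by
      rw [rTensorΔ_rTensor_mulRight, hcoassoc]
  -- step 4: push `mulRight χ'` inside and combine
  have e4 : rTensor V (mulRight k χ')
        (actT ρ (H ⊗[k] H) (rTensor H (Δ k H) χ) (rTensor V (Δ k H) Gv))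
      = actT ρ (H ⊗[k] H) (rTensor H (Δ k H) χ)
          (∑ j ∈ s₂, rTensor V (mulRight k (Δ k H (y2 j) * χ'))
            ((TensorProduct.assoc k H H V).symm (lTensor H β (β (ρ (y1 j) v))))) := by
    rw [← actT_mulRight_comm]
    congr 1
    rw [e3, map_sum]
    exact Finset.sum_congr rfl fun j _ => by
      rw [mulRight_mul, rTensor_comp]; rfl
  -- step 5: absorb `mulLeft χ` into actT and use the cocycle identity
  have e5 : rTensor V (mulLeft k χ)
        (actT ρ (H ⊗[k] H) (rTensor H (Δ k H) χ)
          (∑ j ∈ s₂, rTensor V (mulRight k (Δ k H (y2 j) * χ'))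
            ((TensorProduct.assoc k H H V).symm (lTensor H β (β (ρ (y1 j) v))))))
      = actT ρ (H ⊗[k] H)
          ((TensorProduct.assoc k H H H).symm (((1:H) ⊗ₜ[k] χ) * lTensor H (Δ k H) χ))
          (∑ j ∈ s₂, rTensor V (mulRight k (Δ k H (y2 j) * χ'))
            ((TensorProduct.assoc k H H V).symm (lTensor H β (β (ρ (y1 j) v))))) := by
    rw [← actT_tmul_one ρ hone χ, ← actT_mul ρ hmul]
    congr 2
    rw [hcoc, LinearEquiv.symm_apply_apply]
  -- after step 5 we apply assoc; step 6 turns everything into thT3/thR form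
  have e6 : TensorProduct.assoc k H H V
        (actT ρ (H ⊗[k] H)
          ((TensorProduct.assoc k H H H).symm (((1:H) ⊗ₜ[k] χ) * lTensor H (Δ k H) χ))
          (∑ j ∈ s₂, rTensor V (mulRight k (Δ k H (y2 j) * χ'))
            ((TensorProduct.assoc k H H V).symm (lTensor H β (β (ρ (y1 j) v))))))
      = ∑ i ∈ s₁, ∑ j ∈ s₂,
          TensorProduct.map (mulLeft k (x1 i)) (actT ρ H (χ * Δ k H (x2 i)))
            (thR (Δ k H (y2 j) * χ') (lTensor H β (β (ρ (y1 j) v)))) := by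
    rw [assoc_actT]
    rw [hξa, map_sum, LinearMap.sum_apply]
    refine Finset.sum_congr rfl fun i _ => ?_
    rw [thT3_tmul, map_sum, map_sum]
    exact Finset.sum_congr rfl fun j _ => by rw [assoc_rTensor_mulRight]
  -- step 7: crossed-module compatibility
  have e7 : ∀ i ∈ s₁, ∀ j ∈ s₂,
      TensorProduct.map (mulLeft k (x1 i)) (actT ρ H (χ * Δ k H (x2 i)))
          (thR (Δ k H (y2 j) * χ') (lTensor H β (β (ρ (y1 j) v))))
        = omM ρ β χ v (x1 i) (Δ k H (x2 i)) (y1 j ⊗ₜ[k] (Δ k H (y2 j) * χ')) := by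
    intro i _ j _
    rw [step_compat ρ β hmul hFG, omM_tmul]
  -- step 8: the inverse cocycle identity
  have e8 : ∀ i ∈ s₁,
      ∑ j ∈ s₂, omM ρ β χ v (x1 i) (Δ k H (x2 i)) (y1 j ⊗ₜ[k] (Δ k H (y2 j) * χ'))
        = ∑ j ∈ s₂, TensorProduct.map (mulLeft k (x1 i))
            (actT ρ H χ ∘ₗ rTensor V (mulRight k (y2 j)) ∘ₗ cG ρ β (Δ k H (x2 i)))
            (cG ρ β (Δ k H (y1 j) * χ') v) := by
    intro i _
    rw [← map_sum, ← hξb, invcoc χ χ' h1 h2 hcoc, hξc, map_sum, map_sum]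
    exact Finset.sum_congr rfl fun j _ => omM_assoc3 ρ β χ v (x1 i) (Δ k H (x2 i)) _ _
  -- step 9: compatibility again, then reassemble via phiM
  have e9 : ∀ i ∈ s₁, ∀ j ∈ s₂,
      TensorProduct.map (mulLeft k (x1 i))
          (actT ρ H χ ∘ₗ rTensor V (mulRight k (y2 j)) ∘ₗ cG ρ β (Δ k H (x2 i)))
          (cG ρ β (Δ k H (y1 j) * χ') v)
        = phiM ρ β χ ((x1 i ⊗ₜ[k] Δ k H (x2 i))
            * TensorProduct.assoc k H H H (Δ k H (y1 j) ⊗ₜ[k] y2 j)) Gv := by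
    intro i _ j _
    rw [cG_Δmul ρ β hmul hFG, ← hGvdef, stepN ρ β hmul]
  -- step 10: sum up and use the mixed cocycle consequence
  have e10 : ∑ i ∈ s₁, ∑ j ∈ s₂,
      phiM ρ β χ ((x1 i ⊗ₜ[k] Δ k H (x2 i))
        * TensorProduct.assoc k H H H (Δ k H (y1 j) ⊗ₜ[k] y2 j)) Gv
      = phiM ρ β χ (((1:H) ⊗ₜ[k] χ') * TensorProduct.assoc k H H H (χ ⊗ₜ[k] (1:H))) Gv := by
    have hsum : ∑ i ∈ s₁, ∑ j ∈ s₂,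
        ((x1 i ⊗ₜ[k] Δ k H (x2 i))
          * TensorProduct.assoc k H H H (Δ k H (y1 j) ⊗ₜ[k] y2 j))
        = lTensor H (Δ k H) χ * TensorProduct.assoc k H H H (rTensor H (Δ k H) χ') := by
      rw [hL, hR', map_sum, Finset.sum_mul_sum]
    calc ∑ i ∈ s₁, ∑ j ∈ s₂,
        phiM ρ β χ ((x1 i ⊗ₜ[k] Δ k H (x2 i))
          * TensorProduct.assoc k H H H (Δ k H (y1 j) ⊗ₜ[k] y2 j)) Gv
        = phiM ρ β χ (∑ i ∈ s₁, ∑ j ∈ s₂, ((x1 i ⊗ₜ[k] Δ k H (x2 i))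
            * TensorProduct.assoc k H H H (Δ k H (y1 j) ⊗ₜ[k] y2 j))) Gv := by
          rw [map_sum, LinearMap.sum_apply]
          exact Finset.sum_congr rfl fun i _ => by rw [map_sum, LinearMap.sum_apply]
      _ = phiM ρ β χ (((1:H) ⊗ₜ[k] χ') * TensorProduct.assoc k H H H (χ ⊗ₜ[k] (1:H))) Gv := by
          rw [hsum, step8 χ χ' h1 h2 hcoc]
  -- chain everything together
  rw [e1, e2, e4, e5, e6]
  rw [Finset.sum_congr rfl fun i hi => Finset.sum_congr rfl fun j hj => e7 i hi j hj]
  rw [Finset.sum_congr rfl e8]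
  rw [Finset.sum_congr rfl fun i hi => Finset.sum_congr rfl fun j hj => e9 i hi j hj]
  rw [e10, ← stepP ρ β hmul]

end Main

lemma map_mulLeft_mulRight (a d b : H) (t : H ⊗[k] V) :
    TensorProduct.map (mulLeft k a ∘ₗ mulRight k d) (ρ b) t
      = TensorProduct.map (mulLeft k a) (ρ b) (rTensor V (mulRight k d) t) := by
  induction t using TensorProduct.induction_on with
  | zero => simp
  | add x y hx hy => simp only [map_add, hx, hy]
  | tmul m n => simp

lemma tw_eq (χ χ' : H ⊗[k] H) {ι₁ ι₂ : Type} (s₁ : Finset ι₁) (x1 x2 : ι₁ → H)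
    (s₂ : Finset ι₂) (y1 y2 : ι₂ → H)
    (hx : χ = ∑ i ∈ s₁, x1 i ⊗ₜ[k] x2 i) (hy : χ' = ∑ j ∈ s₂, y1 j ⊗ₜ[k] y2 j) :
    twistedCoaction k H V ρ β s₁ x1 x2 s₂ y1 y2 = actT ρ H χ ∘ₗ cG ρ β χ' := by
  apply LinearMap.ext; intro w
  have hc : cG ρ β χ' w = ∑ j ∈ s₂, rTensor V (mulRight k (y2 j)) (β (ρ (y1 j) w)) := by
    rw [hy]; simp [LinearMap.sum_apply]
  rw [LinearMap.comp_apply, hc, hx]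
  simp only [twistedCoaction, LinearMap.sum_apply, LinearMap.coe_comp, Function.comp_apply,
    map_sum, LinearMap.sum_apply, actT_tmul]
  rw [Finset.sum_comm]
  exact Finset.sum_congr rfl fun j _ => Finset.sum_congr rfl fun i _ =>
    map_mulLeft_mulRight ρ (x1 i) (y2 j) (x2 i) _

end PT2
end Aux

/-- For a crossed module `(V, ρ, β)` over `H` and a counital 2-cocycle
`χ ∈ H ⊗ H` (with inverse `χ'`), the twisted coaction `β_χ` is counital and coassociative
with respect to the twisted coproduct `Δ_χ`. -/
theorem statement_0
    {k H V : Type} [Field k] [Ring H] [HopfAlgebra k H] [AddCommGroup V] [Module k V]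
    (hS : Function.Bijective (S k H))
    (ρ : H →ₗ[k] V →ₗ[k] V) (β : V →ₗ[k] H ⊗[k] V)
    (hcm : IsCrossedModule k H V ρ β)
    (χ χ' : H ⊗[k] H) (hχ : IsCocycle k H χ χ')
    {ι₁ ι₂ : Type} (s₁ : Finset ι₁) (x1 x2 : ι₁ → H) (s₂ : Finset ι₂) (y1 y2 : ι₂ → H)
    (hx : χ = ∑ i ∈ s₁, x1 i ⊗ₜ[k] x2 i) (hy : χ' = ∑ j ∈ s₂, y1 j ⊗ₜ[k] y2 j) :
    (∀ v : V, (TensorProduct.lid k V)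
        ((LinearMap.rTensor V (ε k H))
          (twistedCoaction k H V ρ β s₁ x1 x2 s₂ y1 y2 v)) = v)
    ∧ (∀ v : V,
        (LinearMap.rTensor V (twistedComul k H χ χ'))
            (twistedCoaction k H V ρ β s₁ x1 x2 s₂ y1 y2 v)
          = (TensorProduct.assoc k H H V).symm
              ((LinearMap.lTensor H (twistedCoaction k H V ρ β s₁ x1 x2 s₂ y1 y2))
                (twistedCoaction k H V ρ β s₁ x1 x2 s₂ y1 y2 v))) := by
  classical
  obtain ⟨h1, h2, hcoc, hεl, hεr⟩ := hχ
  have hone : ∀ w : V, ρ 1 w = w := hcm.act_one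
  have hmul : ∀ (g h : H) (w : V), ρ (g * h) w = ρ g (ρ h w) := hcm.act_mul
  have hco : ∀ w : V, LinearMap.rTensor V (Δ k H) (β w)
      = (TensorProduct.assoc k H H V).symm ((LinearMap.lTensor H β) (β w)) :=
    hcm.coact_coassoc
  have hcu : ∀ w : V, (TensorProduct.lid k V)
      ((LinearMap.rTensor V (ε k H)) (β w)) = w := hcm.coact_counit
  have hFG : ∀ h : H, PT2.cF ρ β (Δ k H h) = PT2.cG ρ β (Δ k H h) :=
    PT2.compat' ρ β hcm.compat
  have htw : twistedCoaction k H V ρ β s₁ x1 x2 s₂ y1 y2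
      = PT2.actT ρ H χ ∘ₗ PT2.cG ρ β χ' :=
    PT2.tw_eq ρ β χ χ' s₁ x1 x2 s₂ y1 y2 hx hy
  constructor
  · intro v
    rw [htw, LinearMap.comp_apply]
    exact PT2.main1 ρ β χ χ' hone hcu h2 hεl hεr v
  · intro v
    rw [htw, LinearMap.comp_apply, LinearEquiv.eq_symm_apply]
    have := PT2.main2 ρ β χ χ' s₁ x1 x2 s₂ y1 y2 hone hmul hco hFG h1 h2 hcoc hx hy v
    simpa [twistedComul, LinearMap.comp_apply] using this
end

section
/- Let (V, ▷, β) be a crossed module over the Hopf algebra H, χ ∈ H⊗H a counital 2-cocycle, and β_χ(v) = χ⁽¹⁾·(χ⁻⁽¹⁾ ▷ v)₍₁₎·χ⁻⁽²⁾ ⊗ χ⁽²⁾ ▷ (χ⁻⁽¹⁾ ▷ v)₍∞₎ the twisted coaction. Writing Δ_χ(h) = h₍<1>₎⊗h₍<2>₎ for the twisted coproduct and β_χ(v) = v₍<1>₎⊗v₍<∞>₎, the unchanged action ▷ and the twisted coaction β_χ satisfy the crossed module compatibility over H_χ: h₍<1>₎·v₍<1>₎ ⊗ h₍<2>₎ ▷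 v₍<∞>₎ = (h₍<1>₎ ▷ v)₍<1>₎·h₍<2>₎ ⊗ (h₍<1>₎ ▷ v)₍<∞>₎ for all h ∈ H, v ∈ V (products taken in H, whose multiplication is unchanged under twisting). -/
open scoped TensorProduct
open TensorProduct LinearMap

open PaperTwist

namespace TwistAux

variable {k H V : Type} [Field k] [Ring H] [HopfAlgebra k H] [AddCommGroup V] [Module k V]

lemma mulLeft_add' (a a' : H) :
    LinearMap.mulLeft k (a + a') = LinearMap.mulLeft k a + LinearMap.mulLeft k a' := by
  ext x; simp [add_mul]

lemma mulLeft_smul' (c : k) (a : H) :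
    LinearMap.mulLeft k (c • a) = c • LinearMap.mulLeft k a := by
  ext x; simp [smul_mul_assoc]

lemma mulRight_add' (a a' : H) :
    LinearMap.mulRight k (a + a') = LinearMap.mulRight k a + LinearMap.mulRight k a' := by
  ext x; simp [mul_add]

lemma mulRight_smul' (c : k) (a : H) :
    LinearMap.mulRight k (c • a) = c • LinearMap.mulRight k a := by
  ext x; simp [mul_smul_comm]

noncomputable def Lop (ρ : H →ₗ[k] V →ₗ[k] V) :
    H ⊗[k] H →ₗ[k] H ⊗[k] V →ₗ[k] H ⊗[k] V :=
  TensorProduct.lift <| LinearMap.mk₂ k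
    (fun a b => TensorProduct.map (LinearMap.mulLeft k a) (ρ b))
    (fun a a' b => by rw [mulLeft_add', TensorProduct.map_add_left])
    (fun c a b => by rw [mulLeft_smul', TensorProduct.map_smul_left])
    (fun a b b' => by rw [map_add, TensorProduct.map_add_right])
    (fun c a b => by rw [map_smul, TensorProduct.map_smul_right])

@[simp] lemma Lop_tmul (ρ : H →ₗ[k] V →ₗ[k] V) (a b : H) :
    Lop ρ (a ⊗ₜ[k] b) = TensorProduct.map (LinearMap.mulLeft k a) (ρ b) := rfl

noncomputable def Mop (ρ : H →ₗ[k] V →ₗ[k] V) :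
    H ⊗[k] H →ₗ[k] (V →ₗ[k] H ⊗[k] V) →ₗ[k] (V →ₗ[k] H ⊗[k] V) :=
  TensorProduct.lift <| LinearMap.mk₂ k
    (fun a b => (LinearMap.llcomp k V (H ⊗[k] V) (H ⊗[k] V)
        (LinearMap.rTensor V (LinearMap.mulRight k b))) ∘ₗ
      (LinearMap.lcomp k (H ⊗[k] V) (ρ a)))
    (fun a a' b => by ext f v; simp)
    (fun c a b => by ext f v; simp)
    (fun a b b' => by ext f v; simp [mulRight_add'])
    (fun c a b => by ext f v; simp [mulRight_smul'])

@[simp] lemma Mop_tmul (ρ : H →ₗ[k] V →ₗ[k] V) (a b : H) (f : V →ₗ[k] H ⊗[k] V) :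
    Mop ρ (a ⊗ₜ[k] b) f = (LinearMap.rTensor V (LinearMap.mulRight k b)) ∘ₗ f ∘ₗ ρ a := rfl

variable (ρ : H →ₗ[k] V →ₗ[k] V) (β : V →ₗ[k] H ⊗[k] V)

lemma rho_mul (hmul : ∀ (g h : H) (v : V), ρ (g * h) v = ρ g (ρ h v)) (g h : H) :
    ρ (g * h) = ρ g ∘ₗ ρ h := LinearMap.ext (hmul g h)

lemma Lop_mul (hmul : ∀ (g h : H) (v : V), ρ (g * h) v = ρ g (ρ h v)) (u w : H ⊗[k] H) :
    Lop (V := V) ρ (u * w) = Lop ρ u ∘ₗ Lop ρ w := by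
  induction u using TensorProduct.induction_on with
  | zero => simp
  | add u u' hu hu' => simp [add_mul, map_add, hu, hu', LinearMap.add_comp]
  | tmul a b =>
    induction w using TensorProduct.induction_on with
    | zero => simp
    | add w w' h1 h2 => simp [mul_add, map_add, h1, h2, LinearMap.comp_add]
    | tmul c d =>
      rw [Algebra.TensorProduct.tmul_mul_tmul]
      simp only [Lop_tmul]
      rw [LinearMap.mulLeft_mul, rho_mul ρ hmul, TensorProduct.map_comp]

lemma Lop_one (hone : ∀ v : V, ρ 1 v = v) : Lop (V := V) ρ 1 = LinearMap.id := by
  rw [Algebra.TensorProduct.one_def]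
  rw [Lop_tmul, LinearMap.mulLeft_one, LinearMap.ext hone (g := LinearMap.id)]
  exact TensorProduct.map_id

lemma Mop_mul (hmul : ∀ (g h : H) (v : V), ρ (g * h) v = ρ g (ρ h v))
    (u w : H ⊗[k] H) (f : V →ₗ[k] H ⊗[k] V) :
    Mop ρ u (Mop ρ w f) = Mop ρ (w * u) f := by
  induction u using TensorProduct.induction_on with
  | zero => simp
  | add u u' hu hu' => simp [mul_add, map_add, LinearMap.add_apply, hu, hu']
  | tmul a b =>
    induction w using TensorProduct.induction_on with
    | zero => simp
    | add w w' h1 h2 => simp [add_mul, map_add, LinearMap.add_apply, h1, h2]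
    | tmul c d =>
      simp only [Algebra.TensorProduct.tmul_mul_tmul, Mop_tmul, LinearMap.mulRight_mul,
        rho_mul ρ hmul, LinearMap.rTensor_comp, LinearMap.comp_assoc]

lemma Lop_rT (u : H ⊗[k] H) (b : H) :
    Lop (V := V) ρ u ∘ₗ LinearMap.rTensor V (LinearMap.mulRight k b)
      = LinearMap.rTensor V (LinearMap.mulRight k b) ∘ₗ Lop ρ u := by
  induction u using TensorProduct.induction_on with
  | zero => simp
  | add u u' hu hu' => simp [map_add, LinearMap.add_comp, LinearMap.comp_add, hu, hu']
  | tmul a c =>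
    apply TensorProduct.ext'
    intro x v
    simp [mul_assoc]

lemma Lop_rT_apply (u : H ⊗[k] H) (b : H) (x : H ⊗[k] V) :
    Lop ρ u (LinearMap.rTensor V (LinearMap.mulRight k b) x)
      = LinearMap.rTensor V (LinearMap.mulRight k b) (Lop ρ u x) :=
  LinearMap.congr_fun (Lop_rT ρ u b) x

lemma Mop_Lop (u w : H ⊗[k] H) (f : V →ₗ[k] H ⊗[k] V) :
    Mop ρ u (Lop ρ w ∘ₗ f) = Lop ρ w ∘ₗ Mop ρ u f := by
  induction u using TensorProduct.induction_on with
  | zero => simp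
  | add u u' hu hu' => simp [map_add, LinearMap.add_apply, LinearMap.comp_add, hu, hu']
  | tmul a b =>
    ext v
    simp only [Mop_tmul, LinearMap.comp_apply]
    exact (Lop_rT_apply ρ w b (f (ρ a v))).symm

lemma compat_map
    (hcompat : ∀ (h : H) (v : V) (ι : Type) (s : Finset ι) (h1 h2 : ι → H),
      Δ k H h = ∑ i ∈ s, h1 i ⊗ₜ[k] h2 i →
      ∑ i ∈ s, (TensorProduct.map (LinearMap.mulLeft k (h1 i)) (ρ (h2 i))) (β v)
        = ∑ i ∈ s, (LinearMap.rTensor V (LinearMap.mulRight k (h2 i))) (β (ρ (h1 i) v)))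
    (h : H) :
    Lop ρ (Δ k H h) ∘ₗ β = Mop ρ (Δ k H h) β := by
  obtain ⟨Sf, hSf⟩ := TensorProduct.exists_finset (Δ k H h)
  ext v
  have hc := hcompat h v (H × H) Sf Prod.fst Prod.snd hSf
  calc (Lop ρ (Δ k H h) ∘ₗ β) v
      = ∑ p ∈ Sf, (TensorProduct.map (LinearMap.mulLeft k p.1) (ρ p.2)) (β v) := by
        rw [LinearMap.comp_apply, hSf, map_sum, LinearMap.sum_apply]
        simp only [Lop_tmul]
    _ = ∑ p ∈ Sf, (LinearMap.rTensor V (LinearMap.mulRight k p.2)) (β (ρ p.1 v)) := hc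
    _ = Mop ρ (Δ k H h) β v := by
        rw [hSf, map_sum, LinearMap.sum_apply, LinearMap.sum_apply]
        simp only [Mop_tmul, LinearMap.comp_apply]

lemma key (hmul : ∀ (g h : H) (v : V), ρ (g * h) v = ρ g (ρ h v))
    (hcm : ∀ h : H, Lop ρ (Δ k H h) ∘ₗ β = Mop ρ (Δ k H h) β)
    (h : H) (u : H ⊗[k] H) :
    Lop ρ (Δ k H h) ∘ₗ Mop ρ u β = Mop ρ (Δ k H h * u) β := by
  induction u using TensorProduct.induction_on with
  | zero => simp
  | add u u' hu hu' => simp [mul_add, map_add, LinearMap.add_apply, LinearMap.comp_add, hu, hu']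
  | tmul a b =>
    ext v
    simp only [Mop_tmul, LinearMap.comp_apply]
    rw [Lop_rT_apply, ← Mop_mul ρ hmul (a ⊗ₜ[k] b) (Δ k H h) β]
    simp only [Mop_tmul, LinearMap.comp_apply]
    rw [← LinearMap.comp_apply (Lop ρ (Δ k H h)) β, hcm h]

lemma tc_eq {ι₁ ι₂ : Type} (s₁ : Finset ι₁) (x1 x2 : ι₁ → H) (s₂ : Finset ι₂) (y1 y2 : ι₂ → H) :
    twistedCoaction k H V ρ β s₁ x1 x2 s₂ y1 y2
      = Lop ρ (∑ i ∈ s₁, x1 i ⊗ₜ[k] x2 i) ∘ₗ Mop ρ (∑ j ∈ s₂, y1 j ⊗ₜ[k] y2 j) β := by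
  have hM : Mop ρ (∑ j ∈ s₂, y1 j ⊗ₜ[k] y2 j) β
      = ∑ j ∈ s₂, LinearMap.rTensor V (LinearMap.mulRight k (y2 j)) ∘ₗ β ∘ₗ ρ (y1 j) := by
    rw [map_sum, LinearMap.sum_apply]
    simp only [Mop_tmul]
  have hL : Lop (V := V) ρ (∑ i ∈ s₁, x1 i ⊗ₜ[k] x2 i)
      = ∑ i ∈ s₁, TensorProduct.map (LinearMap.mulLeft k (x1 i)) (ρ (x2 i)) := by
    rw [map_sum]
    simp only [Lop_tmul]
  ext v
  rw [hM, hL, LinearMap.comp_apply, LinearMap.sum_apply, LinearMap.sum_apply]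
  simp only [twistedCoaction, LinearMap.coe_sum, Finset.sum_apply, LinearMap.comp_apply]
  refine Finset.sum_congr rfl fun i _ => ?_
  rw [map_sum]
  refine Finset.sum_congr rfl fun j _ => ?_
  rw [show LinearMap.rTensor V (LinearMap.mulRight k (y2 j))
      = TensorProduct.map (LinearMap.mulRight k (y2 j)) LinearMap.id from rfl]
  conv_rhs => rw [← LinearMap.comp_apply, ← TensorProduct.map_comp, LinearMap.comp_id]

end TwistAux

open TwistAux

/-- For a crossed module `(V, ρ, β)` over `H` and a counital 2-cocycle
`χ ∈ H ⊗ H` (with inverse `χ'`), the unchanged action `ρ` together with the twisted coaction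
`β_χ` satisfies the crossed module compatibility over the twisted Hopf algebra `H_χ`:
`h₍<1>₎·v₍<1>₎ ⊗ h₍<2>₎ ▷ v₍<∞>₎ = (h₍<1>₎ ▷ v)₍<1>₎·h₍<2>₎ ⊗ (h₍<1>₎ ▷ v)₍<∞>₎`,
expressed via arbitrary finite representations of the twisted coproduct `Δ_χ h`. -/
theorem statement_1
    {k H V : Type} [Field k] [Ring H] [HopfAlgebra k H] [AddCommGroup V] [Module k V]
    (hS : Function.Bijective (S k H))
    (ρ : H →ₗ[k] V →ₗ[k] V) (β : V →ₗ[k] H ⊗[k] V)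
    (hcm : IsCrossedModule k H V ρ β)
    (χ χ' : H ⊗[k] H) (hχ : IsCocycle k H χ χ')
    {ι₁ ι₂ : Type} (s₁ : Finset ι₁) (x1 x2 : ι₁ → H) (s₂ : Finset ι₂) (y1 y2 : ι₂ → H)
    (hx : χ = ∑ i ∈ s₁, x1 i ⊗ₜ[k] x2 i) (hy : χ' = ∑ j ∈ s₂, y1 j ⊗ₜ[k] y2 j) :
    ∀ (h : H) (v : V) (ι : Type) (s : Finset ι) (h1 h2 : ι → H),
      twistedComul k H χ χ' h = ∑ i ∈ s, h1 i ⊗ₜ[k] h2 i →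
      ∑ i ∈ s, (TensorProduct.map (LinearMap.mulLeft k (h1 i)) (ρ (h2 i)))
          (twistedCoaction k H V ρ β s₁ x1 x2 s₂ y1 y2 v)
        = ∑ i ∈ s, (LinearMap.rTensor V (LinearMap.mulRight k (h2 i)))
            (twistedCoaction k H V ρ β s₁ x1 x2 s₂ y1 y2 (ρ (h1 i) v)) := by
  intro h v ι s h1 h2 hrep
  have hmul := hcm.act_mul
  have hone := hcm.act_one
  set tc := twistedCoaction k H V ρ β s₁ x1 x2 s₂ y1 y2 with htcdef
  have htc : tc = Lop ρ χ ∘ₗ Mop ρ χ' β := by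
    rw [htcdef, hx, hy]; exact tc_eq ρ β s₁ x1 x2 s₂ y1 y2
  have hD : twistedComul k H χ χ' h = χ * (Δ k H h * χ') := by
    simp [twistedComul]
  set D := χ * (Δ k H h * χ') with hDdef
  have hcompmap : ∀ g : H, Lop ρ (Δ k H g) ∘ₗ β = Mop ρ (Δ k H g) β :=
    compat_map ρ β hcm.compat
  -- rewrite both sides in terms of Lop / Mop of D
  have hLHS : ∑ i ∈ s, (TensorProduct.map (LinearMap.mulLeft k (h1 i)) (ρ (h2 i))) (tc v)
      = Lop ρ D (tc v) := by
    rw [← hD, hrep, map_sum, LinearMap.sum_apply]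
    simp only [Lop_tmul]
  have hRHS : ∑ i ∈ s, (LinearMap.rTensor V (LinearMap.mulRight k (h2 i))) (tc (ρ (h1 i) v))
      = Mop ρ D tc v := by
    rw [← hD, hrep, map_sum, LinearMap.sum_apply, LinearMap.sum_apply]
    simp only [Mop_tmul, LinearMap.comp_apply]
  rw [hLHS, hRHS]
  -- the map-level identity
  have e1 : Lop (V := V) ρ χ' ∘ₗ Lop ρ χ = LinearMap.id := by
    rw [← Lop_mul ρ hmul, hχ.2.1, Lop_one ρ hone]
  have e2 : Lop ρ D ∘ₗ tc = Lop ρ χ ∘ₗ Mop ρ (Δ k H h * χ') β := by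
    rw [htc, hDdef, Lop_mul ρ hmul, Lop_mul ρ hmul]
    calc (Lop ρ χ ∘ₗ Lop ρ (Δ k H h) ∘ₗ Lop ρ χ') ∘ₗ Lop ρ χ ∘ₗ Mop ρ χ' β
        = Lop ρ χ ∘ₗ Lop ρ (Δ k H h) ∘ₗ (Lop ρ χ' ∘ₗ Lop ρ χ) ∘ₗ Mop ρ χ' β := by
          simp only [LinearMap.comp_assoc]
      _ = Lop ρ χ ∘ₗ Lop ρ (Δ k H h) ∘ₗ Mop ρ χ' β := by
          rw [e1, LinearMap.id_comp]
      _ = Lop ρ χ ∘ₗ Mop ρ (Δ k H h * χ') β := by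
          rw [key ρ β hmul hcompmap h χ']
  have e3 : Mop ρ D tc = Lop ρ χ ∘ₗ Mop ρ (Δ k H h * χ') β := by
    rw [htc, Mop_Lop, Mop_mul ρ hmul]
    congr 1
    rw [hDdef, ← mul_assoc, hχ.2.1, one_mul]
  rw [← LinearMap.comp_apply, e2, e3]
end

section
/- Let (V, ▷, β_V) and (W, ▷, β_W) be crossed modules over the Hopf algebra H and χ ∈ H⊗H a counital 2-cocycle. The braiding is preserved under twisting: writing β_χ(v) = v₍<1>₎⊗v₍<∞>₎ for the twisted coaction on V, one has, for all v ∈ V, w ∈ W, χ⁻⁽¹⁾ ▷ (v₍<1>₎ ▷ w) ⊗ χ⁻⁽²⁾ ▷ v₍<∞>₎ = (χ⁻⁽¹⁾ ▷ v)₍₁₎ ▷ (χ⁻⁽²⁾ ▷ w) ⊗ (χ⁻⁽¹⁾ ▷ v)₍∞₎ (on the left one further independent copy of χ⁻¹ is summed; on the right β denotes the untwisted coaction on V). Equivalently, c_χ ∘ Ψ_χ = Ψ ∘ c_χ where Ψ(v⊗w) = v₍₁₎ ▷ w ⊗ v₍∞₎ is the crossed module braiding, Ψ_χ its analogue built from β_χ,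 and c_χ(v⊗w) = χ⁻⁽¹⁾ ▷ v ⊗ χ⁻⁽²⁾ ▷ w. -/
open scoped TensorProduct
open TensorProduct LinearMap

namespace PaperTwist

variable (k H : Type) [Field k] [Ring H] [HopfAlgebra k H]

variable (V : Type) [AddCommGroup V] [Module k V]

variable (W : Type) [AddCommGroup W] [Module k W]

/-- The diagonal action of `H` on `V ⊗ W`: `h ▷ (v ⊗ w) = h₁ ▷ v ⊗ h₂ ▷ w`. -/
noncomputable def diagAction (ρV : H →ₗ[k] V →ₗ[k] V) (ρW : H →ₗ[k] W →ₗ[k] W) :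
    H →ₗ[k] V ⊗[k] W →ₗ[k] V ⊗[k] W :=
  TensorProduct.curry
    ((TensorProduct.map (TensorProduct.lift ρV) (TensorProduct.lift ρW)) ∘ₗ
      (TensorProduct.tensorTensorTensorComm k H H V W).toLinearMap ∘ₗ
      (LinearMap.rTensor (V ⊗[k] W) (Δ k H)))

/-- The tensor product coaction on `V ⊗ W`: `v ⊗ w ↦ v₍₁₎·w₍₁₎ ⊗ (v₍∞₎ ⊗ w₍∞₎)`. -/
noncomputable def tensorCoaction (βV : V →ₗ[k] H ⊗[k] V) (βW : W →ₗ[k] H ⊗[k] W) :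
    V ⊗[k] W →ₗ[k] H ⊗[k] (V ⊗[k] W) :=
  (TensorProduct.map (LinearMap.mul' k H) LinearMap.id) ∘ₗ
    (TensorProduct.tensorTensorTensorComm k H V H W).toLinearMap ∘ₗ
    (TensorProduct.map βV βW)

/-- The natural transformation `c_χ(v ⊗ w) = χ⁻⁽¹⁾ ▷ v ⊗ χ⁻⁽²⁾ ▷ w`, expressed through a
finite representation `χ⁻¹ = ∑ y1 j ⊗ y2 j`. -/
noncomputable def cTwist (ρV : H →ₗ[k] V →ₗ[k] V) (ρW : H →ₗ[k] W →ₗ[k] W)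
    {ι₂ : Type} (s₂ : Finset ι₂) (y1 y2 : ι₂ → H) :
    V ⊗[k] W →ₗ[k] V ⊗[k] W :=
  ∑ j ∈ s₂, TensorProduct.map (ρV (y1 j)) (ρW (y2 j))


/-- The crossed module braiding `Ψ(v ⊗ w) = v₍₁₎ ▷ w ⊗ v₍∞₎`, built from a coaction on `V`
and the action on `W`. -/
noncomputable def braiding (ρW : H →ₗ[k] W →ₗ[k] W) (βV : V →ₗ[k] H ⊗[k] V) :
    V ⊗[k] W →ₗ[k] W ⊗[k] V :=
  (LinearMap.rTensor V (TensorProduct.lift ρW)) ∘ₗ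
    (TensorProduct.assoc k H W V).symm.toLinearMap ∘ₗ
    (LinearMap.lTensor H (TensorProduct.comm k V W).toLinearMap) ∘ₗ
    (TensorProduct.assoc k H V W).toLinearMap ∘ₗ
    (LinearMap.rTensor W βV)

end PaperTwist

open PaperTwist

section Aux

variable {k H : Type} [Field k] [Ring H] [HopfAlgebra k H]
variable {V W : Type} [AddCommGroup V] [Module k V] [AddCommGroup W] [Module k W]

/-- For fixed `w`, the map `t ↦ Ψ(t ⊗ w)`-style auxiliary: on pure tensors,
`h ⊗ u ↦ ρW h w ⊗ u`. -/
noncomputable def Baux (ρW : H →ₗ[k] W →ₗ[k] W) (w : W) : H ⊗[k] V →ₗ[k] W ⊗[k] V :=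
  (LinearMap.rTensor V (TensorProduct.lift ρW)) ∘ₗ
    (TensorProduct.assoc k H W V).symm.toLinearMap ∘ₗ
    (LinearMap.lTensor H (TensorProduct.comm k V W).toLinearMap) ∘ₗ
    (TensorProduct.assoc k H V W).toLinearMap ∘ₗ
    ((TensorProduct.mk k (H ⊗[k] V) W).flip w)

@[simp] lemma Baux_tmul (ρW : H →ₗ[k] W →ₗ[k] W) (w : W) (h : H) (u : V) :
    Baux (V := V) ρW w (h ⊗ₜ[k] u) = (ρW h w) ⊗ₜ[k] u := by
  simp [Baux]

lemma braiding_eq (ρW : H →ₗ[k] W →ₗ[k] W) (β : V →ₗ[k] H ⊗[k] V) (v : V) (w : W) :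
    braiding k H V W ρW β (v ⊗ₜ[k] w) = Baux ρW w (β v) := by
  simp [braiding, Baux]

end Aux

/-- The crossed module braiding is preserved under twisting by a counital
2-cocycle `χ ∈ H ⊗ H`: `c_χ ∘ Ψ_χ = Ψ ∘ c_χ` on `V ⊗ W`, i.e. for all `v, w`,
`χ⁻⁽¹⁾ ▷ (v₍<1>₎ ▷ w) ⊗ χ⁻⁽²⁾ ▷ v₍<∞>₎ = (χ⁻⁽¹⁾ ▷ v)₍₁₎ ▷ (χ⁻⁽²⁾ ▷ w) ⊗ (χ⁻⁽¹⁾ ▷ v)₍∞₎`,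
where `Ψ_χ` is the braiding built from the twisted coaction `β_χ` on `V`. -/
theorem statement_4
    {k H V W : Type} [Field k] [Ring H] [HopfAlgebra k H]
    [AddCommGroup V] [Module k V] [AddCommGroup W] [Module k W]
    (hS : Function.Bijective (S k H))
    (ρV : H →ₗ[k] V →ₗ[k] V) (βV : V →ₗ[k] H ⊗[k] V)
    (ρW : H →ₗ[k] W →ₗ[k] W) (βW : W →ₗ[k] H ⊗[k] W)
    (hcmV : IsCrossedModule k H V ρV βV) (hcmW : IsCrossedModule k H W ρW βW)
    (χ χ' : H ⊗[k] H) (hχ : IsCocycle k H χ χ')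
    {ι₁ ι₂ : Type} (s₁ : Finset ι₁) (x1 x2 : ι₁ → H) (s₂ : Finset ι₂) (y1 y2 : ι₂ → H)
    (hx : χ = ∑ i ∈ s₁, x1 i ⊗ₜ[k] x2 i) (hy : χ' = ∑ j ∈ s₂, y1 j ⊗ₜ[k] y2 j) :
    ∀ (v : V) (w : W),
      cTwist k H W V ρW ρV s₂ y1 y2
          (braiding k H V W ρW (twistedCoaction k H V ρV βV s₁ x1 x2 s₂ y1 y2) (v ⊗ₜ[k] w))
        = braiding k H V W ρW βV (cTwist k H V W ρV ρW s₂ y1 y2 (v ⊗ₜ[k] w)) := by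
  intro v w
  have hone : (∑ l ∈ s₂, ∑ i ∈ s₁, (y1 l * x1 i) ⊗ₜ[k] (y2 l * x2 i) : H ⊗[k] H)
      = (1 : H) ⊗ₜ[k] (1 : H) := by
    have h2 := hχ.2.1
    rw [hy, hx, Finset.sum_mul_sum] at h2
    simpa [Algebra.TensorProduct.tmul_mul_tmul, Algebra.TensorProduct.one_def] using h2
  have hcT : cTwist k H V W ρV ρW s₂ y1 y2 (v ⊗ₜ[k] w)
      = ∑ j ∈ s₂, (ρV (y1 j) v) ⊗ₜ[k] (ρW (y2 j) w) := by
    simp [cTwist]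
  rw [hcT, map_sum, braiding_eq]
  have htw : twistedCoaction k H V ρV βV s₁ x1 x2 s₂ y1 y2 v
      = ∑ i ∈ s₁, ∑ j ∈ s₂,
          (TensorProduct.map ((LinearMap.mulLeft k (x1 i)) ∘ₗ (LinearMap.mulRight k (y2 j)))
            (ρV (x2 i))) (βV (ρV (y1 j) v)) := by
    simp [twistedCoaction]
  rw [htw, map_sum]
  simp only [map_sum]
  rw [Finset.sum_comm]
  have hbr : ∀ j ∈ s₂,
      (∑ i ∈ s₁, cTwist k H W V ρW ρV s₂ y1 y2
          (Baux ρW w ((TensorProduct.map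
            ((LinearMap.mulLeft k (x1 i)) ∘ₗ (LinearMap.mulRight k (y2 j))) (ρV (x2 i)))
            (βV (ρV (y1 j) v)))))
        = braiding k H V W ρW βV ((ρV (y1 j) v) ⊗ₜ[k] (ρW (y2 j) w)) := by
    intro j _
    rw [braiding_eq]
    generalize βV (ρV (y1 j) v) = t
    induction t using TensorProduct.induction_on with
    | zero => simp
    | add a b ha hb =>
        simp only [map_add, Finset.sum_add_distrib] at ha hb ⊢
        rw [ha, hb]
    | tmul h u =>
        simp only [TensorProduct.map_tmul, LinearMap.comp_apply, LinearMap.mulLeft_apply,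
          LinearMap.mulRight_apply, Baux_tmul, cTwist, LinearMap.sum_apply]
        have key := congrArg
          (TensorProduct.map ((ρW.flip w) ∘ₗ LinearMap.mulRight k (h * y2 j)) (ρV.flip u)) hone
        simp only [map_sum, TensorProduct.map_tmul, LinearMap.comp_apply,
          LinearMap.mulRight_apply, LinearMap.flip_apply] at key
        simp only [hcmW.act_mul, hcmV.act_mul, hcmW.act_one, hcmV.act_one] at key ⊢
        rw [Finset.sum_comm]
        exact key
  exact Finset.sum_congr rfl hbr
end

section
/- Twisting by χ⁻¹ undoes twisting by χ on coactions of crossed modules: let (V, ▷, β) be a crossed module over the Hopf algebra H, χ ∈ H⊗H a counital 2-cocycle, and β_χ(v) = v₍<1>₎⊗v₍<∞>₎ the twisted coaction. Then for all v ∈ V, χ⁻⁽¹⁾·(χ⁽¹⁾ ▷ v)₍<1>₎·χ⁽²⁾ ⊗ χ⁻⁽²⁾ ▷ (χ⁽¹⁾ ▷ v)₍<∞>₎ = β(v), where the displayed expression is the β_χ-twist formula with the roles of χ and χ⁻¹ exchanged (one implicit summation over each of the two independent copies χ and χ⁻¹). -/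
open scoped TensorProduct
open TensorProduct LinearMap

open PaperTwist

section AuxTwist

variable {k H V : Type} [Field k] [Ring H] [HopfAlgebra k H]
  [AddCommGroup V] [Module k V]

/-- Auxiliary: `H ⊗ H` acting on `H ⊗ V` by left multiplication on the first factor
and `ρ` on the second, linearly in the acting element. -/
noncomputable def auxL (ρ : H →ₗ[k] V →ₗ[k] V) :
    H ⊗[k] H →ₗ[k] (H ⊗[k] V →ₗ[k] H ⊗[k] V) :=
  (TensorProduct.homTensorHomMap (RingHom.id k) H V H V) ∘ₗ
    TensorProduct.map (LinearMap.mul k H) ρ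

lemma auxL_tmul (ρ : H →ₗ[k] V →ₗ[k] V) (a b : H) :
    auxL ρ (a ⊗ₜ[k] b) = TensorProduct.map (LinearMap.mulLeft k a) (ρ b) := by
  have : LinearMap.mul k H a = LinearMap.mulLeft k a := rfl
  simp [auxL, TensorProduct.homTensorHomMap_apply, this]

lemma mulRight_add' (a b : H) :
    LinearMap.mulRight k (a + b) = LinearMap.mulRight k a + LinearMap.mulRight k b := by
  ext x; simp [mul_add]

lemma mulRight_smul' (c : k) (a : H) :
    LinearMap.mulRight k (c • a) = c • LinearMap.mulRight k a := by
  ext x; simp [Algebra.mul_smul_comm]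

/-- Auxiliary: the map `z1 ⊗ z2 ↦ (rTensor (mulRight z2)) (β (ρ z1 v))`. -/
noncomputable def auxR (ρ : H →ₗ[k] V →ₗ[k] V) (β : V →ₗ[k] H ⊗[k] V) (v : V) :
    H ⊗[k] H →ₗ[k] H ⊗[k] V :=
  TensorProduct.lift (LinearMap.mk₂ k
    (fun z1 z2 => (LinearMap.rTensor V (LinearMap.mulRight k z2)) (β (ρ z1 v)))
    (fun a a' b => by simp [map_add, LinearMap.add_apply])
    (fun c a b => by simp [map_smul, LinearMap.smul_apply])
    (fun a b b' => by
      simp only [mulRight_add', LinearMap.rTensor_add, LinearMap.add_apply])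
    (fun c a b => by
      simp only [mulRight_smul', LinearMap.rTensor_smul, LinearMap.smul_apply]))

lemma auxR_tmul (ρ : H →ₗ[k] V →ₗ[k] V) (β : V →ₗ[k] H ⊗[k] V) (v : V) (a b : H) :
    auxR ρ β v (a ⊗ₜ[k] b)
      = (LinearMap.rTensor V (LinearMap.mulRight k b)) (β (ρ a v)) := by
  simp [auxR]

/-- Term-wise identity used in the main computation. -/
lemma term_eq (ρ : H →ₗ[k] V →ₗ[k] V) (β : V →ₗ[k] H ⊗[k] V)
    (hcm : IsCrossedModule k H V ρ β)
    (p q p' q' r t r' t' : H) (v : V) :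
    (TensorProduct.map (LinearMap.mulLeft k p ∘ₗ LinearMap.mulRight k t') (ρ q))
        ((TensorProduct.map (LinearMap.mulLeft k p' ∘ₗ LinearMap.mulRight k r) (ρ q'))
          (β (ρ r' (ρ t v))))
      = auxL ρ ((p * p') ⊗ₜ[k] (q * q'))
          (auxR ρ β v ((r' * t) ⊗ₜ[k] (r * t'))) := by
  rw [auxL_tmul, auxR_tmul, hcm.act_mul r' t v]
  induction β (ρ r' (ρ t v)) using TensorProduct.induction_on with
  | zero => simp
  | tmul u w =>
      simp only [TensorProduct.map_tmul, LinearMap.coe_comp, Function.comp_apply,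
        LinearMap.mulLeft_apply, LinearMap.mulRight_apply, LinearMap.rTensor_tmul,
        hcm.act_mul, mul_assoc]
  | add x y hx hy => simp only [map_add, hx, hy]

end AuxTwist


/-- Twisting by `χ⁻¹` undoes twisting by `χ` on the coaction of a crossed
module: applying the twist formula with the roles of `χ` and `χ⁻¹` exchanged to the twisted
coaction `β_χ` recovers the original coaction `β`, i.e.
`χ⁻⁽¹⁾·(χ⁽¹⁾ ▷ v)₍<1>₎·χ⁽²⁾ ⊗ χ⁻⁽²⁾ ▷ (χ⁽¹⁾ ▷ v)₍<∞>₎ = β(v)`. -/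
theorem statement_5
    {k H V : Type} [Field k] [Ring H] [HopfAlgebra k H] [AddCommGroup V] [Module k V]
    (hS : Function.Bijective (S k H))
    (ρ : H →ₗ[k] V →ₗ[k] V) (β : V →ₗ[k] H ⊗[k] V)
    (hcm : IsCrossedModule k H V ρ β)
    (χ χ' : H ⊗[k] H) (hχ : IsCocycle k H χ χ')
    {ι₁ ι₂ : Type} (s₁ : Finset ι₁) (x1 x2 : ι₁ → H) (s₂ : Finset ι₂) (y1 y2 : ι₂ → H)
    (hx : χ = ∑ i ∈ s₁, x1 i ⊗ₜ[k] x2 i) (hy : χ' = ∑ j ∈ s₂, y1 j ⊗ₜ[k] y2 j) :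
    ∀ v : V,
      twistedCoaction k H V ρ (twistedCoaction k H V ρ β s₁ x1 x2 s₂ y1 y2)
          s₂ y1 y2 s₁ x1 x2 v
        = β v := by
  intro v
  classical
  have he : χ' * χ = (1 : H ⊗[k] H) := hχ.2.1
  have hsum : χ' * χ = ∑ j ∈ s₂, ∑ i ∈ s₁, (y1 j * x1 i) ⊗ₜ[k] (y2 j * x2 i) := by
    rw [hx, hy, Finset.sum_mul_sum]
    simp [Algebra.TensorProduct.tmul_mul_tmul]
  set F : ι₂ → ι₁ → ι₁ → ι₂ → H ⊗[k] V := fun a b c d =>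
    auxL ρ ((y1 a * x1 c) ⊗ₜ[k] (y2 a * x2 c))
      (auxR ρ β v ((y1 d * x1 b) ⊗ₜ[k] (y2 d * x2 b))) with hF
  have kL :
      twistedCoaction k H V ρ (twistedCoaction k H V ρ β s₁ x1 x2 s₂ y1 y2)
          s₂ y1 y2 s₁ x1 x2 v
        = ∑ a ∈ s₂, ∑ b ∈ s₁, ∑ c ∈ s₁, ∑ d ∈ s₂, F a b c d := by
    simp only [twistedCoaction, LinearMap.sum_apply, LinearMap.coe_comp,
      Function.comp_apply, map_sum]
    refine Finset.sum_congr rfl fun a _ => Finset.sum_congr rfl fun b _ =>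
      Finset.sum_congr rfl fun c _ => Finset.sum_congr rfl fun d _ => ?_
    exact term_eq ρ β hcm (y1 a) (y2 a) (x1 c) (x2 c) (y2 d) (x1 b) (y1 d) (x2 b) v
  have kR :
      auxL ρ (χ' * χ) (auxR ρ β v (χ' * χ))
        = ∑ d ∈ s₂, ∑ b ∈ s₁, ∑ a ∈ s₂, ∑ c ∈ s₁, F a b c d := by
    rw [hsum]
    simp only [map_sum, LinearMap.sum_apply, hF]
  have perm :
      ∑ a ∈ s₂, ∑ b ∈ s₁, ∑ c ∈ s₁, ∑ d ∈ s₂, F a b c d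
        = ∑ d ∈ s₂, ∑ b ∈ s₁, ∑ a ∈ s₂, ∑ c ∈ s₁, F a b c d :=
    calc ∑ a ∈ s₂, ∑ b ∈ s₁, ∑ c ∈ s₁, ∑ d ∈ s₂, F a b c d
        = ∑ a ∈ s₂, ∑ b ∈ s₁, ∑ d ∈ s₂, ∑ c ∈ s₁, F a b c d :=
          Finset.sum_congr rfl fun a _ => Finset.sum_congr rfl fun b _ =>
            Finset.sum_comm
      _ = ∑ a ∈ s₂, ∑ d ∈ s₂, ∑ b ∈ s₁, ∑ c ∈ s₁, F a b c d :=
          Finset.sum_congr rfl fun a _ => Finset.sum_comm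
      _ = ∑ d ∈ s₂, ∑ a ∈ s₂, ∑ b ∈ s₁, ∑ c ∈ s₁, F a b c d :=
          Finset.sum_comm
      _ = ∑ d ∈ s₂, ∑ b ∈ s₁, ∑ a ∈ s₂, ∑ c ∈ s₁, F a b c d :=
          Finset.sum_congr rfl fun d _ => Finset.sum_comm
  have key :
      twistedCoaction k H V ρ (twistedCoaction k H V ρ β s₁ x1 x2 s₂ y1 y2)
          s₂ y1 y2 s₁ x1 x2 v
        = auxL ρ (χ' * χ) (auxR ρ β v (χ' * χ)) := by
    rw [kL, perm, kR]
  rw [key, he, Algebra.TensorProduct.one_def, auxL_tmul, auxR_tmul]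
  simp only [hcm.act_one, LinearMap.mulRight_one, LinearMap.rTensor_id,
    LinearMap.id_coe, id_eq, LinearMap.mulLeft_one]
  induction β v using TensorProduct.induction_on with
  | zero => simp
  | tmul u w => simp [hcm.act_one]
  | add p q hp hq => rw [map_add, hp, hq]
end
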